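/- arXiv:2205.08855 — 2 statements merged into one kernel-verified Lean document; each statement's English description precedes it below -/
import Mathlib

section
/- The subspace M = span_K{τ_ω ⊗ v : ω ∈ S_n, ω ≠ 1} is an R_n-submodule of L̄, and every R_n-submodule of L̄ other than L̄ itself is contained in M; hence M is the unique maximal R_n-submodule of L̄, and L̄/M is isomorphic as an R_n-module to the one-dimensional trivial module V = K·(τ_{ω₀} ⊗ v) on which all generators act by 0. -/
namespace QH1

/-- Generators of the algebra `Rₙ` attached to a single imaginary index:
dots `x k` and crossings `t k`. -/
inductive Gen (n : ℕ) : Type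
  | x (k : Fin n)
  | t (k : Fin (n - 1))

/-- Position `k` viewed in `Fin n`. -/
def pc {n : ℕ} (k : Fin (n - 1)) : Fin n := ⟨k.1, by have := k.2; omega⟩

/-- Position `k+1` viewed in `Fin n`. -/
def ps {n : ℕ} (k : Fin (n - 1)) : Fin n := ⟨k.1 + 1, by have := k.2; omega⟩

variable (K : Type) [Field K]

/-- The free algebra on the generators. -/
abbrev F (n : ℕ) : Type := FreeAlgebra K (Gen n)

def gx {n : ℕ} (k : Fin n) : F K n := FreeAlgebra.ι K (Gen.x k)
def gt {n : ℕ} (k : Fin (n - 1)) : F K n := FreeAlgebra.ι K (Gen.t k)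

/-- The defining relations of `Rₙ` (single imaginary index in `I⁻`). -/
inductive Rel (n : ℕ) : F K n → F K n → Prop
  | xx (k t : Fin n) : Rel n (gx K k * gx K t) (gx K t * gx K k)
  | tsq (k : Fin (n - 1)) : Rel n (gt K k * gt K k) 0
  | braid (k k' : Fin (n - 1)) (h : k'.1 = k.1 + 1) :
      Rel n (gt K k * gt K k' * gt K k) (gt K k' * gt K k * gt K k')
  | ttfar (k t : Fin (n - 1)) (h : k.1 + 1 < t.1 ∨ t.1 + 1 < k.1) :
      Rel n (gt K k * gt K t) (gt K t * gt K k)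
  | xt (k : Fin (n - 1)) : Rel n (gx K (pc k) * gt K k) (gt K k * gx K (ps k))
  | tx (k : Fin (n - 1)) : Rel n (gt K k * gx K (pc k)) (gx K (ps k) * gt K k)
  | txfar (k : Fin (n - 1)) (t : Fin n) (h1 : t ≠ pc k) (h2 : t ≠ ps k) :
      Rel n (gt K k * gx K t) (gx K t * gt K k)

/-- The algebra `Rₙ = R(n·i)` for a single imaginary index `i ∈ I⁻`. -/
abbrev Rn (n : ℕ) : Type := RingQuot (Rel K n)

/-- The dot generators of `Rₙ`. -/
def X {n : ℕ} (k : Fin n) : Rn K n := RingQuot.mkAlgHom K (Rel K n) (gx K k)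

/-- The crossing generators of `Rₙ`. -/
def T {n : ℕ} (k : Fin (n - 1)) : Rn K n := RingQuot.mkAlgHom K (Rel K n) (gt K k)

/-- The simple transposition `s_k` of `{1, …, n}`. -/
def sPerm {n : ℕ} (k : Fin (n - 1)) : Equiv.Perm (Fin n) := Equiv.swap (pc k) (ps k)

/-- `l` is a reduced word for the permutation `ω`. -/
def IsRedWord {n : ℕ} (ω : Equiv.Perm (Fin n)) (l : List (Fin (n - 1))) : Prop :=
  (l.map sPerm).prod = ω ∧ ∀ l' : List (Fin (n - 1)), (l'.map sPerm).prod = ω → l.length ≤ l'.length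

/-- `τ_ω`: the product of crossings along a word. -/
def tprod {n : ℕ} (l : List (Fin (n - 1))) : Rn K n := (l.map (T K)).prod

end QH1

namespace QH1

variable (K : Type) [Field K]

/-- The left ideal of `Rₙ` generated by `x₁, …, xₙ`; the induced module
`L̄ = Rₙ ⊗_{Pₙ} L` is canonically `Rₙ / Rₙ(x₁,…,xₙ)`. -/
def XIdeal (n : ℕ) : Submodule (Rn K n) (Rn K n) :=
  Submodule.span (Rn K n) (Set.range (X K (n := n)))

/-- The induced module `L̄ = Rₙ ⊗_{Pₙ} L ≅ Rₙ / Rₙ(x₁,…,xₙ)`; the class of `τ_ω`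
corresponds to the basis vector `τ_ω ⊗ v`. -/
abbrev Lbar (n : ℕ) : Type := Rn K n ⧸ XIdeal K n

end QH1

namespace QH1

variable {n : ℕ}

lemma pc_ne_ps (k : Fin (n-1)) : pc k ≠ ps k := by
  simp [pc, ps, Fin.ext_iff]

lemma sPerm_mul_self (k : Fin (n-1)) : sPerm k * sPerm k = 1 := by
  simp [sPerm]

lemma sPerm_ne_one (k : Fin (n-1)) : sPerm k ≠ 1 := by
  intro h
  have : sPerm k (pc k) = pc k := by rw [h]; rfl
  rw [sPerm, Equiv.swap_apply_left] at this
  exact pc_ne_ps k this.symm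

/-- swap of adjacent values preserves strict order except on the pair itself. -/
lemma sPerm_lt_iff (k : Fin (n-1)) {x y : Fin n} (hxy : x < y)
    (hne : ¬(x = pc k ∧ y = ps k)) : sPerm k x < sPerm k y := by
  have hk := k.2
  rcases x with ⟨x, hx⟩; rcases y with ⟨y, hy⟩
  simp only [sPerm, Equiv.swap_apply_def, pc, ps, Fin.ext_iff, Fin.lt_iff_val_lt_val] at *
  split_ifs <;> simp_all <;> omega

def InvSet (ω : Equiv.Perm (Fin n)) : Finset (Fin n × Fin n) :=
  Finset.univ.filter (fun p => p.1 < p.2 ∧ ω p.2 < ω p.1)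

def inv (ω : Equiv.Perm (Fin n)) : ℕ := (InvSet ω).card

/-- descent: the position of value `k` is after the position of value `k+1`. -/
def Des (ω : Equiv.Perm (Fin n)) (k : Fin (n-1)) : Prop := ω⁻¹ (ps k) < ω⁻¹ (pc k)

instance {ω : Equiv.Perm (Fin n)} {k : Fin (n-1)} : Decidable (Des ω k) := by
  unfold Des; infer_instance

lemma perm_eq_one_of_strictMono (σ : Equiv.Perm (Fin n)) (h : StrictMono (σ : Fin n → Fin n)) :
    σ = 1 := by
  let e : Fin n ≃o Fin n := StrictMono.orderIsoOfSurjective _ h σ.surjective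
  have he : ∀ i, e i = σ i := fun i => rfl
  refine Equiv.ext (fun x => ?_)
  have := Fin.coe_orderIso_apply e x
  rw [he] at this
  exact Fin.ext this

lemma mem_invSet {ω : Equiv.Perm (Fin n)} {p : Fin n × Fin n} :
    p ∈ InvSet ω ↔ p.1 < p.2 ∧ ω p.2 < ω p.1 := by simp [InvSet]

lemma sPerm_lt_iff' (k : Fin (n-1)) {x y : Fin n} (hxy : x ≠ y)
    (hne : ¬({x, y} : Set (Fin n)) = {pc k, ps k}) :
    (sPerm k x < sPerm k y ↔ x < y) := by
  constructor
  · intro h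
    rcases lt_or_gt_of_ne hxy with h' | h'
    · exact h'
    · exfalso
      have : sPerm k y < sPerm k x := by
        apply sPerm_lt_iff k h'
        rintro ⟨rfl, rfl⟩
        exact hne (by ext z; simp [Set.mem_insert_iff]; tauto)
      exact absurd h (not_lt.2 this.le)
  · intro h'
    apply sPerm_lt_iff k h'
    rintro ⟨rfl, rfl⟩
    exact hne rfl

lemma invSet_sPerm_mul (k : Fin (n-1)) (ω : Equiv.Perm (Fin n)) :
    InvSet (sPerm k * ω) =
      if Des ω k then (InvSet ω).erase (ω⁻¹ (ps k), ω⁻¹ (pc k))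
      else insert (ω⁻¹ (pc k), ω⁻¹ (ps k)) (InvSet ω) := by
  have hval : ω (ω⁻¹ (pc k)) = pc k := ω.apply_symm_apply _
  have hval' : ω (ω⁻¹ (ps k)) = ps k := ω.apply_symm_apply _
  have hpq : ω⁻¹ (pc k) ≠ ω⁻¹ (ps k) := by
    intro h; exact pc_ne_ps k (by rw [← hval, h, hval'])
  have key : ∀ p : Fin n × Fin n, (p ≠ (ω⁻¹ (ps k), ω⁻¹ (pc k)) ∧ p ≠ (ω⁻¹ (pc k), ω⁻¹ (ps k))) →
      (p ∈ InvSet (sPerm k * ω) ↔ p ∈ InvSet ω) := by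
    rintro ⟨p, q⟩ ⟨h1, h2⟩
    simp only [mem_invSet, Equiv.Perm.mul_apply]
    constructor
    · rintro ⟨hlt, hinv⟩
      refine ⟨hlt, ?_⟩
      by_contra hcon
      push_neg at hcon
      rcases eq_or_lt_of_le hcon with heq | hlt2
      · have : q = p := by
          have := ω.injective heq; exact this ▸ rfl
        exact absurd hlt (by simp [this])
      · have hne2 : ω p ≠ ω q := fun h => (hlt.ne (ω.injective h)).elim
        have : sPerm k (ω p) < sPerm k (ω q) := by
          rw [sPerm_lt_iff' k hne2]
          · exact hlt2
          · intro hs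
            -- {ω p, ω q} = {pc k, ps k}
            have hp : ω p = pc k ∨ ω p = ps k := by
              have : ω p ∈ ({pc k, ps k} : Set (Fin n)) := hs ▸ (by simp)
              simpa using this
            have hq : ω q = pc k ∨ ω q = ps k := by
              have : ω q ∈ ({pc k, ps k} : Set (Fin n)) := hs ▸ (by simp [Set.mem_insert_iff])
              simpa using this
            rcases hp with hp | hp <;> rcases hq with hq | hq
            · exact hne2 (hp.trans hq.symm)
            · exact h2 (by
                have : p = ω⁻¹ (pc k) := by rw [← hp]; simp
                have hq' : q = ω⁻¹ (ps k) := by rw [← hq]; simp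
                simp [this, hq'])
            · exact h1 (by
                have : p = ω⁻¹ (ps k) := by rw [← hp]; simp
                have hq' : q = ω⁻¹ (pc k) := by rw [← hq]; simp
                simp [this, hq'])
            · exact hne2 (hp.trans hq.symm)
        exact absurd hinv (not_lt.2 this.le)
    · rintro ⟨hlt, hinv⟩
      refine ⟨hlt, ?_⟩
      have hne2 : ω q ≠ ω p := hinv.ne
      apply sPerm_lt_iff k hinv
      rintro ⟨hq, hp⟩
      apply h1
      have : q = ω⁻¹ (pc k) := by rw [← hq]; simp
      have hp' : p = ω⁻¹ (ps k) := by rw [← hp]; simp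
      simp [this, hp']
  by_cases hdes : Des ω k
  · rw [if_pos hdes]
    ext ⟨p, q⟩
    rcases eq_or_ne (p, q) (ω⁻¹ (ps k), ω⁻¹ (pc k)) with heq | h1
    · rw [heq]
      simp only [Finset.mem_erase, ne_eq, not_true_eq_false, false_and, iff_false]
      simp only [mem_invSet, Equiv.Perm.mul_apply, hval, hval', not_and]
      intro _
      rw [sPerm, Equiv.swap_apply_left, Equiv.swap_apply_right]
      intro hcon
      exact absurd hcon (not_lt.2 (le_of_lt (by
        have : (pc k).1 < (ps k).1 := by simp [pc, ps]
        exact this)))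
    · rcases eq_or_ne (p, q) (ω⁻¹ (pc k), ω⁻¹ (ps k)) with heq2 | h2
      · -- this pair: p > q position-wise? Des: ω⁻¹ ps < ω⁻¹ pc so p = ω⁻¹ pc... 
        rw [heq2]
        simp only [Finset.mem_erase, ne_eq, mem_invSet, Equiv.Perm.mul_apply, hval, hval']
        constructor
        · rintro ⟨h, _⟩; exact absurd h (not_lt.2 hdes.le)
        · rintro ⟨_, h, _⟩; exact absurd h (not_lt.2 hdes.le)
      · rw [Finset.mem_erase]
        rw [key (p,q) ⟨h1, h2⟩]
        exact ⟨fun h => ⟨h1, h⟩, fun h => h.2⟩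
  · rw [if_neg hdes]
    have hlt : ω⁻¹ (pc k) < ω⁻¹ (ps k) := by
      rcases lt_or_gt_of_ne hpq with h | h
      · exact h
      · exact absurd h (by simpa [Des] using hdes)
    ext ⟨p, q⟩
    rcases eq_or_ne (p, q) (ω⁻¹ (pc k), ω⁻¹ (ps k)) with heq | h2
    · rw [heq]
      simp only [Finset.mem_insert, true_or, iff_true, mem_invSet, Equiv.Perm.mul_apply, hval, hval']
      refine ⟨hlt, ?_⟩
      rw [sPerm, Equiv.swap_apply_left, Equiv.swap_apply_right]
      simp [pc, ps, Fin.lt_iff_val_lt_val]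
    · rcases eq_or_ne (p, q) (ω⁻¹ (ps k), ω⁻¹ (pc k)) with heq2 | h1
      · rw [heq2]
        simp only [Finset.mem_insert, mem_invSet, Equiv.Perm.mul_apply, hval, hval']
        constructor
        · rintro ⟨h, _⟩; exact absurd h (not_lt.2 hlt.le)
        · rintro (h | ⟨h, _⟩)
          · exact absurd (congrArg Prod.fst h) hpq.symm
          · exact absurd h (not_lt.2 hlt.le)
      · rw [key (p,q) ⟨h1, h2⟩, Finset.mem_insert]
        exact ⟨fun h => Or.inr h, fun h => h.resolve_left h2⟩

lemma inv_sPerm_mul_of_des {k : Fin (n-1)} {ω : Equiv.Perm (Fin n)} (h : Des ω k) :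
    inv (sPerm k * ω) = inv ω - 1 ∧ 1 ≤ inv ω := by
  have hmem : (ω⁻¹ (ps k), ω⁻¹ (pc k)) ∈ InvSet ω := by
    rw [mem_invSet]
    refine ⟨h, ?_⟩
    simp only [Equiv.Perm.inv_def, Equiv.apply_symm_apply]
    simp [pc, ps, Fin.lt_iff_val_lt_val]
  constructor
  · rw [inv, invSet_sPerm_mul, if_pos h, Finset.card_erase_of_mem hmem]; rfl
  · exact Finset.card_pos.2 ⟨_, hmem⟩ 

lemma inv_sPerm_mul_of_not_des {k : Fin (n-1)} {ω : Equiv.Perm (Fin n)} (h : ¬ Des ω k) :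
    inv (sPerm k * ω) = inv ω + 1 := by
  have hnmem : (ω⁻¹ (pc k), ω⁻¹ (ps k)) ∉ InvSet ω := by
    rw [mem_invSet]
    rintro ⟨-, hcon⟩
    simp only [Equiv.Perm.inv_def, Equiv.apply_symm_apply] at hcon
    exact absurd hcon (by simp [pc, ps, Fin.lt_iff_val_lt_val])
  rw [inv, invSet_sPerm_mul, if_neg h, Finset.card_insert_of_notMem hnmem]; rfl

lemma inv_one : inv (1 : Equiv.Perm (Fin n)) = 0 := by
  rw [inv, Finset.card_eq_zero]
  ext ⟨p, q⟩
  simp only [mem_invSet, Equiv.Perm.one_apply, Finset.notMem_empty, iff_false, not_and]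
  intro h; exact not_lt.2 h.le

lemma eq_one_of_inv_eq_zero {ω : Equiv.Perm (Fin n)} (h : inv ω = 0) : ω = 1 := by
  have hsm : StrictMono ω := by
    intro p q hpq
    by_contra hc
    push_neg at hc
    rcases eq_or_lt_of_le hc with heq | hlt
    · exact absurd (ω.injective heq.symm ▸ rfl : p = q) hpq.ne
    · have : (p, q) ∈ InvSet ω := mem_invSet.2 ⟨hpq, hlt⟩
      rw [inv, Finset.card_eq_zero] at h
      simp [h] at this
  exact perm_eq_one_of_strictMono ω hsm

lemma des_or_eq_one (ω : Equiv.Perm (Fin n)) : ω = 1 ∨ ∃ k, Des ω k := by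
  by_cases h : ∃ k, Des ω k
  · exact Or.inr h
  push_neg at h
  left
  set σ : Equiv.Perm (Fin n) := ω⁻¹ with hσ
  have hmono : StrictMono (σ : Fin n → Fin n) := by
    have hstep : ∀ m (hm : m + 1 < n), ω⁻¹ ⟨m, by omega⟩ < ω⁻¹ ⟨m+1, hm⟩ := by
      intro m hm
      have hd := h ⟨m, by omega⟩
      rw [Des] at hd
      push_neg at hd
      rcases eq_or_lt_of_le hd with heq | hlt
      · exfalso
        have h2 : pc (⟨m, by omega⟩ : Fin (n-1)) = ps (⟨m, by omega⟩ : Fin (n-1)) :=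
          σ.injective heq
        simp [pc, ps, Fin.ext_iff] at h2
      · simpa [pc, ps, hσ] using hlt
    intro p q hpq
    rcases p with ⟨p, hp⟩; rcases q with ⟨q, hq⟩
    rw [Fin.lt_iff_val_lt_val] at hpq
    simp only at hpq
    obtain ⟨d, rfl⟩ : ∃ d, q = p + (d + 1) := ⟨q - p - 1, by omega⟩
    clear hpq
    induction d with
    | zero => exact hstep p hq
    | succ e ih =>
      exact lt_trans (ih (by omega)) (hstep (p + (e+1)) (by omega))
  have hs1 : σ = 1 := perm_eq_one_of_strictMono σ hmono
  have : ω⁻¹ = 1 := hσ ▸ hs1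
  rw [← inv_inv ω, this]; rfl

lemma inv_wordProd_le (l : List (Fin (n-1))) : inv ((l.map sPerm).prod) ≤ l.length := by
  induction l with
  | nil => simp [inv_one]
  | cons k l ih =>
    simp only [List.map_cons, List.prod_cons, List.length_cons]
    by_cases h : Des ((l.map sPerm).prod) k
    · have := (inv_sPerm_mul_of_des h).1
      omega
    · rw [inv_sPerm_mul_of_not_des h]
      omega

lemma exists_word_inv (ω : Equiv.Perm (Fin n)) :
    ∃ l : List (Fin (n-1)), (l.map sPerm).prod = ω ∧ l.length = inv ω := by
  generalize hm : inv ω = m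
  induction m generalizing ω with
  | zero => exact ⟨[], by simp [eq_one_of_inv_eq_zero hm]⟩
  | succ m ih =>
    rcases des_or_eq_one ω with rfl | ⟨k, hk⟩
    · rw [inv_one] at hm; omega
    · obtain ⟨hd, h1⟩ := inv_sPerm_mul_of_des hk
      obtain ⟨l, hl, hlen⟩ := ih (sPerm k * ω) (by omega)
      refine ⟨k :: l, ?_, ?_⟩
      · simp only [List.map_cons, List.prod_cons, hl]
        rw [← mul_assoc, sPerm_mul_self, one_mul]
      · simp only [List.length_cons, hlen, hd]


lemma inv_le_sq (ω : Equiv.Perm (Fin n)) : inv ω ≤ n * n := by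
  calc inv ω ≤ Finset.univ.card := Finset.card_filter_le _ _
  _ = n * n := by simp




-- part2
lemma sPerm_apply_pc (k : Fin (n-1)) : sPerm k (pc k) = ps k := Equiv.swap_apply_left _ _
lemma sPerm_apply_ps (k : Fin (n-1)) : sPerm k (ps k) = pc k := Equiv.swap_apply_right _ _
lemma sPerm_apply_of_ne (k : Fin (n-1)) {x : Fin n} (h1 : x ≠ pc k) (h2 : x ≠ ps k) :
    sPerm k x = x := Equiv.swap_apply_of_ne_of_ne h1 h2

lemma sPerm_inv (k : Fin (n-1)) : (sPerm k)⁻¹ = sPerm k := Equiv.swap_inv _ _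

lemma pcps_ne_far {i j : Fin (n-1)} (h : i.1 + 1 < j.1 ∨ j.1 + 1 < i.1) :
    pc j ≠ pc i ∧ pc j ≠ ps i ∧ ps j ≠ pc i ∧ ps j ≠ ps i := by
  refine ⟨?_, ?_, ?_, ?_⟩ <;> (simp only [pc, ps, ne_eq, Fin.ext_iff]; omega)

lemma sPerm_conj (i j : Fin (n-1)) :
    sPerm i * sPerm j * sPerm i = Equiv.swap (sPerm i (pc j)) (sPerm i (ps j)) := by
  rw [Equiv.swap_apply_apply, sPerm_inv]
  rfl

lemma sPerm_comm {i j : Fin (n-1)} (h : i.1 + 1 < j.1 ∨ j.1 + 1 < i.1) :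
    sPerm i * sPerm j = sPerm j * sPerm i := by
  obtain ⟨h1, h2, h3, h4⟩ := pcps_ne_far h
  have e : sPerm i * sPerm j * sPerm i = sPerm j := by
    rw [sPerm_conj, sPerm_apply_of_ne i h1 h2, sPerm_apply_of_ne i h3 h4]; rfl
  calc sPerm i * sPerm j = (sPerm i * sPerm j * sPerm i) * sPerm i := by
        rw [mul_assoc, sPerm_mul_self, mul_one]
  _ = sPerm j * sPerm i := by rw [e]

lemma ps_eq_pc {i j : Fin (n-1)} (h : j.1 = i.1 + 1) : ps i = pc j := by
  simp [pc, ps, Fin.ext_iff, h]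

lemma sPerm_braid {i j : Fin (n-1)} (h : j.1 = i.1 + 1) :
    sPerm i * sPerm j * sPerm i = sPerm j * sPerm i * sPerm j := by
  have h1 : pc i ≠ pc j := by simp only [pc, ps, ne_eq, Fin.ext_iff]; omega
  have h2 : ps j ≠ pc i := by simp only [pc, ps, ne_eq, Fin.ext_iff]; omega
  have h3 : ps j ≠ ps i := by simp only [pc, ps, ne_eq, Fin.ext_iff]; omega
  have h4 : pc i ≠ ps i := by simp only [pc, ps, ne_eq, Fin.ext_iff]; omega
  rw [sPerm_conj i j, sPerm_conj j i]
  rw [← ps_eq_pc h, sPerm_apply_ps, sPerm_apply_of_ne i h2 h3]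
  have h5 : pc i ≠ ps j := fun hc => h2 hc.symm
  rw [sPerm_apply_of_ne j h1 h5, ps_eq_pc h, sPerm_apply_pc, Equiv.swap_comm]


end QH1

namespace QH1

variable {n : ℕ}

/-- reduced word predicate via inversion count -/
def RW (l : List (Fin (n - 1))) (ω : Equiv.Perm (Fin n)) : Prop :=
  (l.map sPerm).prod = ω ∧ l.length = inv ω

lemma RW_of_isRedWord {ω : Equiv.Perm (Fin n)} {l : List (Fin (n - 1))}
    (h : IsRedWord ω l) : RW l ω := by
  obtain ⟨hp, hmin⟩ := h
  refine ⟨hp, le_antisymm ?_ ?_⟩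
  · obtain ⟨l₀, hl₀, hlen₀⟩ := exists_word_inv ω
    exact (hmin l₀ hl₀).trans hlen₀.le
  · exact hp ▸ inv_wordProd_le l

lemma RW_cons {i : Fin (n - 1)} {l₁ : List (Fin (n - 1))} {ω : Equiv.Perm (Fin n)}
    (h : RW (i :: l₁) ω) : Des ω i ∧ RW l₁ (sPerm i * ω) := by
  obtain ⟨hp, hlen⟩ := h
  rw [List.map_cons, List.prod_cons] at hp
  have hp1 : (l₁.map sPerm).prod = sPerm i * ω := by
    rw [← hp, ← mul_assoc, sPerm_mul_self, one_mul]
  have hle : inv (sPerm i * ω) ≤ l₁.length := hp1 ▸ inv_wordProd_le l₁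
  rw [List.length_cons] at hlen
  by_cases hd : Des ω i
  · obtain ⟨hm1, hm2⟩ := inv_sPerm_mul_of_des hd
    exact ⟨hd, hp1, by omega⟩
  · have hm := inv_sPerm_mul_of_not_des hd
    exfalso; omega

lemma RW_cons' {k : Fin (n - 1)} {l : List (Fin (n - 1))} {σ ω : Equiv.Perm (Fin n)}
    (h : RW l σ) (hσ : σ = sPerm k * ω) (hd : Des ω k) : RW (k :: l) ω := by
  obtain ⟨hp, hlen⟩ := h
  obtain ⟨hm1, hm2⟩ := inv_sPerm_mul_of_des hd
  constructor
  · rw [List.map_cons, List.prod_cons, hp, hσ, ← mul_assoc, sPerm_mul_self, one_mul]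
  · rw [List.length_cons, hlen, hσ]; omega

lemma inv_mul_apply {k : Fin (n - 1)} {σ : Equiv.Perm (Fin n)} (x : Fin n) :
    (sPerm k * σ)⁻¹ x = σ⁻¹ (sPerm k x) := by
  rw [mul_inv_rev, sPerm_inv]; rfl

lemma des_sPerm_far {i j : Fin (n - 1)} {ω : Equiv.Perm (Fin n)}
    (hfar : i.1 + 1 < j.1 ∨ j.1 + 1 < i.1) (h : Des ω j) : Des (sPerm i * ω) j := by
  obtain ⟨h1, h2, h3, h4⟩ := pcps_ne_far hfar
  show (sPerm i * ω)⁻¹ (ps j) < (sPerm i * ω)⁻¹ (pc j)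
  rw [inv_mul_apply, inv_mul_apply, sPerm_apply_of_ne i h3 h4, sPerm_apply_of_ne i h1 h2]
  exact h

variable (K : Type) [Field K]

lemma tprod_nil : tprod K ([] : List (Fin (n - 1))) = 1 := by simp [tprod]

lemma tprod_cons (i : Fin (n - 1)) (l : List (Fin (n - 1))) :
    tprod K (i :: l) = T K i * tprod K l := by simp [tprod]

lemma T_mul_self (k : Fin (n - 1)) : T K k * T K k = 0 := by
  have h := RingQuot.mkAlgHom_rel K (Rel.tsq (K := K) (n := n) k)
  rw [map_mul, map_zero] at h
  exact h

lemma T_braid {i j : Fin (n - 1)} (h : j.1 = i.1 + 1) :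
    T K i * T K j * T K i = T K j * T K i * T K j := by
  have h2 := RingQuot.mkAlgHom_rel K (Rel.braid (K := K) (n := n) i j h)
  rw [map_mul, map_mul, map_mul, map_mul] at h2
  exact h2

lemma T_far {i j : Fin (n - 1)} (h : i.1 + 1 < j.1 ∨ j.1 + 1 < i.1) :
    T K i * T K j = T K j * T K i := by
  have h2 := RingQuot.mkAlgHom_rel K (Rel.ttfar (K := K) (n := n) i j h)
  rw [map_mul, map_mul] at h2
  exact h2

/-- Matsumoto-type theorem: the product `τ` along a reduced word depends only on the
permutation. -/
theorem tprod_eq_aux (m : ℕ) :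
    ∀ (ω : Equiv.Perm (Fin n)) (l l' : List (Fin (n - 1))),
      inv ω = m → RW l ω → RW l' ω → tprod K l = tprod K l' := by
  induction m using Nat.strong_induction_on with
  | _ m IH =>
  intro ω l l' hm hl hl'
  match l, l' with
  | [], l' =>
    have h0 : inv ω = 0 := by have := hl.2; simpa using this.symm
    have : l'.length = 0 := by rw [hl'.2, h0]
    rw [List.length_eq_zero_iff] at this
    rw [this]
  | i :: l₁, [] =>
    exfalso
    have h0 : inv ω = 0 := by have := hl'.2; simpa using this.symm
    have := hl.2
    rw [List.length_cons, h0] at this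
    omega
  | i :: l₁, j :: l₁' =>
  obtain ⟨hdi, h₁⟩ := RW_cons hl
  obtain ⟨hdj, h₁'⟩ := RW_cons hl'
  obtain ⟨mi1, mi2⟩ := inv_sPerm_mul_of_des hdi
  obtain ⟨mj1, mj2⟩ := inv_sPerm_mul_of_des hdj
  by_cases hij : i = j
  · subst hij
    have e := IH (inv (sPerm i * ω)) (by omega) (sPerm i * ω) l₁ l₁' rfl h₁ h₁'
    rw [tprod_cons, tprod_cons, e]
  · have hne : i.1 ≠ j.1 := fun hc => hij (Fin.ext hc)
    have core : ∀ (i j : Fin (n - 1)) (l₁ l₁' : List (Fin (n - 1))), j.1 = i.1 + 1 →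
        RW (i :: l₁) ω → RW (j :: l₁') ω → tprod K (i :: l₁) = tprod K (j :: l₁') := by
      intro i j l₁ l₁' hadj hl hl'
      obtain ⟨hdi, h₁⟩ := RW_cons hl
      obtain ⟨hdj, h₁'⟩ := RW_cons hl'
      obtain ⟨mi1, mi2⟩ := inv_sPerm_mul_of_des hdi
      obtain ⟨mj1, mj2⟩ := inv_sPerm_mul_of_des hdj
      have hb : ps i = pc j := ps_eq_pc hadj
      have npsj_pci : ps j ≠ pc i := by simp only [pc, ps, ne_eq, Fin.ext_iff]; omega
      have npsj_psi : ps j ≠ ps i := by simp only [pc, ps, ne_eq, Fin.ext_iff]; omega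
      have npci_pcj : pc i ≠ pc j := by simp only [pc, ps, ne_eq, Fin.ext_iff]; omega
      have npci_psj : pc i ≠ ps j := fun hc => npsj_pci hc.symm
      have hdj' : ω⁻¹ (ps j) < ω⁻¹ (ps i) := by rw [hb]; exact hdj
      -- descents
      have d1 : Des (sPerm i * ω) j := by
        show (sPerm i * ω)⁻¹ (ps j) < (sPerm i * ω)⁻¹ (pc j)
        rw [inv_mul_apply, inv_mul_apply, sPerm_apply_of_ne i npsj_pci npsj_psi,
          ← hb, sPerm_apply_ps]
        exact lt_trans hdj' hdi
      have d2 : Des (sPerm j * (sPerm i * ω)) i := by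
        show _ < _
        rw [inv_mul_apply, inv_mul_apply, inv_mul_apply, inv_mul_apply]
        rw [show sPerm j (ps i) = ps j by rw [hb, sPerm_apply_pc]]
        rw [sPerm_apply_of_ne i npsj_pci npsj_psi]
        rw [sPerm_apply_of_ne j npci_pcj npci_psj, sPerm_apply_pc]
        exact hdj'
      have d1' : Des (sPerm j * ω) i := by
        show _ < _
        rw [inv_mul_apply, inv_mul_apply,
          show sPerm j (ps i) = ps j by rw [hb, sPerm_apply_pc],
          sPerm_apply_of_ne j npci_pcj npci_psj]
        exact lt_trans hdj' hdi
      have d2' : Des (sPerm i * (sPerm j * ω)) j := by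
        show _ < _
        rw [inv_mul_apply, inv_mul_apply, inv_mul_apply, inv_mul_apply,
          sPerm_apply_of_ne i npsj_pci npsj_psi, sPerm_apply_ps,
          ← hb, sPerm_apply_ps, sPerm_apply_of_ne j npci_pcj npci_psj]
        exact hdi
      obtain ⟨e21, e22⟩ := inv_sPerm_mul_of_des d1
      obtain ⟨e31, e32⟩ := inv_sPerm_mul_of_des d2
      obtain ⟨f21, f22⟩ := inv_sPerm_mul_of_des d1'
      obtain ⟨f31, f32⟩ := inv_sPerm_mul_of_des d2'
      obtain ⟨lv, hlv1, hlv2⟩ := exists_word_inv (sPerm i * (sPerm j * (sPerm i * ω)))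
      have hRWlv : RW lv (sPerm i * (sPerm j * (sPerm i * ω))) := ⟨hlv1, hlv2⟩
      have hveq : sPerm j * (sPerm i * (sPerm j * ω)) = sPerm i * (sPerm j * (sPerm i * ω)) := by
        rw [← mul_assoc, ← mul_assoc, ← mul_assoc, ← mul_assoc, sPerm_braid hadj]
      have r1 : RW (i :: lv) (sPerm j * (sPerm i * ω)) := RW_cons' hRWlv rfl d2
      have r2 : RW (j :: i :: lv) (sPerm i * ω) := RW_cons' r1 rfl d1
      have r1' : RW (j :: lv) (sPerm i * (sPerm j * ω)) := RW_cons' hRWlv hveq.symm d2'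
      have r2' : RW (i :: j :: lv) (sPerm j * ω) := RW_cons' r1' rfl d1'
      have e1 : tprod K l₁ = tprod K (j :: i :: lv) :=
        IH (inv (sPerm i * ω)) (by omega) (sPerm i * ω) l₁ (j :: i :: lv) rfl h₁ r2
      have e2 : tprod K l₁' = tprod K (i :: j :: lv) :=
        IH (inv (sPerm j * ω)) (by omega) (sPerm j * ω) l₁' (i :: j :: lv) rfl h₁' r2'
      rw [tprod_cons K i l₁, tprod_cons K j l₁', e1, e2]
      simp only [tprod_cons, ← mul_assoc]
      rw [T_braid K hadj]
    rcases (by omega : j.1 = i.1 + 1 ∨ i.1 = j.1 + 1 ∨ (i.1 + 1 < j.1 ∨ j.1 + 1 < i.1)) with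
      hadj | hadj | hfar
    · exact core i j l₁ l₁' hadj hl hl'
    · exact (core j i l₁' l₁ hadj hl' hl).symm
    · -- far case
      have hfar' : j.1 + 1 < i.1 ∨ i.1 + 1 < j.1 := hfar.symm
      have d2 : Des (sPerm i * ω) j := des_sPerm_far hfar hdj
      have d2' : Des (sPerm j * ω) i := des_sPerm_far hfar' hdi
      obtain ⟨e21, e22⟩ := inv_sPerm_mul_of_des d2
      obtain ⟨f21, f22⟩ := inv_sPerm_mul_of_des d2'
      obtain ⟨lv, hlv1, hlv2⟩ := exists_word_inv (sPerm j * (sPerm i * ω))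
      have hRWlv : RW lv (sPerm j * (sPerm i * ω)) := ⟨hlv1, hlv2⟩
      have hveq : sPerm i * (sPerm j * ω) = sPerm j * (sPerm i * ω) := by
        rw [← mul_assoc, ← mul_assoc, sPerm_comm hfar]
      have r1 : RW (j :: lv) (sPerm i * ω) := RW_cons' hRWlv rfl d2
      have r2 : RW (i :: lv) (sPerm j * ω) := RW_cons' hRWlv hveq.symm d2'
      have e1 : tprod K l₁ = tprod K (j :: lv) :=
        IH (inv (sPerm i * ω)) (by omega) (sPerm i * ω) l₁ (j :: lv) rfl h₁ r1
      have e2 : tprod K l₁' = tprod K (i :: lv) :=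
        IH (inv (sPerm j * ω)) (by omega) (sPerm j * ω) l₁' (i :: lv) rfl h₁' r2
      rw [tprod_cons K i l₁, tprod_cons K j l₁', e1, e2]
      simp only [tprod_cons, ← mul_assoc]
      rw [T_far K hfar]

theorem tprod_eq {ω : Equiv.Perm (Fin n)} {l l' : List (Fin (n - 1))}
    (h : RW l ω) (h' : RW l' ω) : tprod K l = tprod K l' :=
  tprod_eq_aux K (inv ω) ω l l' rfl h h'

end QH1

namespace QH1

variable (K : Type) [Field K] {n : ℕ}

/-- The augmentation character sending all generators to `0`. -/
def epsA (n : ℕ) : Rn K n →ₐ[K] K :=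
  RingQuot.liftAlgHom K ⟨FreeAlgebra.lift K (fun _ => (0 : K)), by
    rintro x y h
    cases h <;> simp [gx, gt]⟩

lemma epsA_X (k : Fin n) : epsA K n (X K k) = 0 := by
  rw [X, epsA, RingQuot.liftAlgHom_mkAlgHom_apply]
  simp [gx]

lemma epsA_T (k : Fin (n - 1)) : epsA K n (T K k) = 0 := by
  rw [T, epsA, RingQuot.liftAlgHom_mkAlgHom_apply]
  simp [gt]

lemma epsA_tprod_ne {l : List (Fin (n - 1))} (h : l ≠ []) : epsA K n (tprod K l) = 0 := by
  cases l with
  | nil => exact absurd rfl h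
  | cons i l => rw [tprod_cons, map_mul, epsA_T, zero_mul]

/-- The kernel of the augmentation character, as a left ideal. -/
def Neps (n : ℕ) : Submodule (Rn K n) (Rn K n) where
  carrier := {r | epsA K n r = 0}
  add_mem' := by
    intro a b ha hb
    simp only [Set.mem_setOf_eq, map_add] at *
    rw [ha, hb, add_zero]
  zero_mem' := by simp
  smul_mem' := by
    intro c x hx
    simp only [Set.mem_setOf_eq, smul_eq_mul, map_mul] at *
    rw [hx, mul_zero]

lemma XIdeal_le_Neps : XIdeal K n ≤ Neps K n :=
  Submodule.span_le.2 (by rintro _ ⟨k, rfl⟩; exact epsA_X K k)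

lemma XIdeal_mul_mem {B : Rn K n} (hB : ∀ k, X K k * B ∈ XIdeal K n)
    {y : Rn K n} (hy : y ∈ XIdeal K n) : y * B ∈ XIdeal K n := by
  induction hy using Submodule.span_induction with
  | mem x hx => obtain ⟨k, rfl⟩ := hx; exact hB k
  | zero => rw [zero_mul]; exact zero_mem _
  | add a b _ _ ha hb => rw [add_mul]; exact add_mem ha hb
  | smul r x _ hx =>
    rw [smul_eq_mul, mul_assoc, ← smul_eq_mul]
    exact Submodule.smul_mem _ r hx

lemma X_mem_XIdeal (k : Fin n) : X K k ∈ XIdeal K n :=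
  Submodule.subset_span ⟨k, rfl⟩

lemma X_mul_mem (k : Fin n) (r : Rn K n) : X K k * r ∈ XIdeal K n := by
  obtain ⟨f, rfl⟩ := RingQuot.mkAlgHom_surjective K (Rel K n) r
  induction f using FreeAlgebra.induction generalizing k with
  | grade0 c =>
    rw [AlgHom.commutes]
    have : X K k * algebraMap K (Rn K n) c = algebraMap K (Rn K n) c • X K k := by
      rw [smul_eq_mul, ← Algebra.commutes]
    rw [this]
    exact Submodule.smul_mem _ _ (X_mem_XIdeal K k)
  | grade1 g =>
    cases g with
    | x t =>
      have : X K k * RingQuot.mkAlgHom K (Rel K n) (FreeAlgebra.ι K (Gen.x t))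
          = X K k • X K t := rfl
      rw [this]
      exact Submodule.smul_mem _ _ (X_mem_XIdeal K t)
    | t t =>
      show X K k * T K t ∈ XIdeal K n
      rcases eq_or_ne k (pc t) with rfl | h1
      · have h := RingQuot.mkAlgHom_rel K (Rel.xt (K := K) (n := n) t)
        rw [map_mul, map_mul] at h
        rw [show RingQuot.mkAlgHom K (Rel K n) (gx K (pc t)) = X K (pc t) from rfl,
          show RingQuot.mkAlgHom K (Rel K n) (gt K t) = T K t from rfl] at h
        rw [h, ← smul_eq_mul]
        exact Submodule.smul_mem _ _ (X_mem_XIdeal K (ps t))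
      rcases eq_or_ne k (ps t) with rfl | h2
      · have h := RingQuot.mkAlgHom_rel K (Rel.tx (K := K) (n := n) t)
        rw [map_mul, map_mul] at h
        rw [show RingQuot.mkAlgHom K (Rel K n) (gx K (pc t)) = X K (pc t) from rfl,
          show RingQuot.mkAlgHom K (Rel K n) (gt K t) = T K t from rfl,
          show RingQuot.mkAlgHom K (Rel K n) (gx K (ps t)) = X K (ps t) from rfl] at h
        rw [← h, ← smul_eq_mul]
        exact Submodule.smul_mem _ _ (X_mem_XIdeal K (pc t))
      · have h := RingQuot.mkAlgHom_rel K (Rel.txfar (K := K) (n := n) t k h1 h2)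
        rw [map_mul, map_mul] at h
        rw [show RingQuot.mkAlgHom K (Rel K n) (gx K k) = X K k from rfl,
          show RingQuot.mkAlgHom K (Rel K n) (gt K t) = T K t from rfl] at h
        rw [← h, ← smul_eq_mul]
        exact Submodule.smul_mem _ _ (X_mem_XIdeal K k)
  | mul a b ha hb =>
    rw [map_mul, ← mul_assoc]
    exact XIdeal_mul_mem K (fun k' => hb k') (ha k)
  | add a b ha hb =>
    rw [map_add, mul_add]
    exact add_mem (ha k) (hb k)

lemma X_smul_Lbar (k : Fin n) (z : Lbar K n) : X K k • z = 0 := by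
  obtain ⟨r, rfl⟩ := Submodule.Quotient.mk_surjective _ z
  rw [← Submodule.Quotient.mk_smul, smul_eq_mul]
  exact (Submodule.Quotient.mk_eq_zero _).2 (X_mul_mem K k r)

lemma rn_smul_ksmul (r : Rn K n) (c : K) (x : Lbar K n) : r • c • x = c • r • x := by
  rw [← algebraMap_smul (Rn K n) c x, ← mul_smul, ← Algebra.commutes, mul_smul,
    algebraMap_smul]

/-- Stability of a `K`-submodule under the generator actions implies stability
under the whole algebra. -/
lemma smul_stable (P : Submodule K (Lbar K n))
    (hX : ∀ (k : Fin n) (y : Lbar K n), y ∈ P → X K k • y ∈ P)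
    (hT : ∀ (k : Fin (n - 1)) (y : Lbar K n), y ∈ P → T K k • y ∈ P)
    (r : Rn K n) (y : Lbar K n) (hy : y ∈ P) : r • y ∈ P := by
  obtain ⟨f, rfl⟩ := RingQuot.mkAlgHom_surjective K (Rel K n) r
  induction f using FreeAlgebra.induction generalizing y with
  | grade0 c =>
    rw [AlgHom.commutes, algebraMap_smul]
    exact P.smul_mem c hy
  | grade1 g =>
    cases g with
    | x t => exact hX t y hy
    | t t => exact hT t y hy
  | mul a b ha hb =>
    rw [map_mul, mul_smul]
    exact ha _ (hb _ hy)
  | add a b ha hb =>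
    rw [map_add, add_smul]
    exact P.add_mem (ha y hy) (hb y hy)

section Red

variable (red : Equiv.Perm (Fin n) → List (Fin (n - 1)))

/-- The spanning set of `M`. -/
def Sset : Set (Lbar K n) :=
  {w : Lbar K n | ∃ ω : Equiv.Perm (Fin n), ω ≠ 1 ∧
    w = Submodule.Quotient.mk (tprod K (red ω))}

/-- `M` as a `K`-submodule. -/
def Mc : Submodule K (Lbar K n) := Submodule.span K (Sset K red)

/-- The filtration by length. -/
def Md (d : ℕ) : Submodule K (Lbar K n) :=
  Submodule.span K {w : Lbar K n | ∃ ω : Equiv.Perm (Fin n), d ≤ inv ω ∧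
    w = Submodule.Quotient.mk (tprod K (red ω))}

lemma red_one (hred : ∀ ω, IsRedWord ω (red ω)) : red 1 = [] := by
  have h2 := (RW_of_isRedWord (hred 1)).2
  rw [inv_one] at h2
  exact List.length_eq_zero_iff.mp h2

/-- Action of `T k` on a basis vector of `L̄`. -/
lemma T_smul_mk_tprod (hred : ∀ ω, IsRedWord ω (red ω)) (k : Fin (n - 1)) (ω : Equiv.Perm (Fin n)) :
    T K k • (Submodule.Quotient.mk (tprod K (red ω)) : Lbar K n) = 0 ∨
    (inv (sPerm k * ω) = inv ω + 1 ∧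
      T K k • (Submodule.Quotient.mk (tprod K (red ω)) : Lbar K n)
        = Submodule.Quotient.mk (tprod K (red (sPerm k * ω)))) := by
  have hRW : ∀ σ, RW (red σ) σ := fun σ => RW_of_isRedWord (hred σ)
  by_cases hd : Des ω k
  · left
    have h0 : T K k * tprod K (red ω) = 0 := by
      obtain ⟨lv, hlv1, hlv2⟩ := exists_word_inv (sPerm k * ω)
      have hc : RW (k :: lv) ω := RW_cons' ⟨hlv1, hlv2⟩ rfl hd
      rw [tprod_eq K (hRW ω) hc, tprod_cons, ← mul_assoc, T_mul_self, zero_mul]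
    rw [← Submodule.Quotient.mk_smul, smul_eq_mul, h0]
    exact (Submodule.Quotient.mk_eq_zero _).2 (zero_mem _)
  · right
    refine ⟨inv_sPerm_mul_of_not_des hd, ?_⟩
    have h0 : T K k * tprod K (red ω) = tprod K (red (sPerm k * ω)) := by
      have hc : RW (k :: red ω) (sPerm k * ω) := by
        constructor
        · rw [List.map_cons, List.prod_cons, (hRW ω).1]
        · rw [List.length_cons, (hRW ω).2, inv_sPerm_mul_of_not_des hd]
      rw [← tprod_cons]
      exact tprod_eq K hc (hRW (sPerm k * ω))
    rw [← Submodule.Quotient.mk_smul, smul_eq_mul, h0]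

lemma ne_one_of_inv_pos {ω : Equiv.Perm (Fin n)} (h : 0 < inv ω) : ω ≠ 1 := by
  intro hc; rw [hc, inv_one] at h; omega

lemma T_smul_Mc (hred : ∀ ω, IsRedWord ω (red ω)) (k : Fin (n - 1)) (y : Lbar K n) (hy : y ∈ Mc K red) :
    T K k • y ∈ Mc K red := by
  induction hy using Submodule.span_induction with
  | mem w hw =>
    obtain ⟨ω, hω, rfl⟩ := hw
    rcases T_smul_mk_tprod K red hred k ω with h | ⟨hi, h⟩
    · rw [h]; exact zero_mem _
    · rw [h]
      exact Submodule.subset_span ⟨sPerm k * ω, ne_one_of_inv_pos (by omega), rfl⟩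
  | zero => rw [smul_zero]; exact zero_mem _
  | add a b _ _ ha hb => rw [smul_add]; exact add_mem ha hb
  | smul c x _ hx =>
    rw [rn_smul_ksmul]
    exact Submodule.smul_mem _ c hx

lemma T_smul_Md (hred : ∀ ω, IsRedWord ω (red ω)) (k : Fin (n - 1)) (d : ℕ) (y : Lbar K n) (hy : y ∈ Md K red d) :
    T K k • y ∈ Md K red (d + 1) := by
  induction hy using Submodule.span_induction with
  | mem w hw =>
    obtain ⟨ω, hω, rfl⟩ := hw
    rcases T_smul_mk_tprod K red hred k ω with h | ⟨hi, h⟩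
    · rw [h]; exact zero_mem _
    · rw [h]
      exact Submodule.subset_span ⟨sPerm k * ω, by omega, rfl⟩
  | zero => rw [smul_zero]; exact zero_mem _
  | add a b _ _ ha hb => rw [smul_add]; exact add_mem ha hb
  | smul c x _ hx =>
    rw [rn_smul_ksmul]
    exact Submodule.smul_mem _ c hx

lemma Mc_le_Md1 : Mc K red ≤ Md K red 1 := by
  apply Submodule.span_mono
  rintro w ⟨ω, hω, rfl⟩
  refine ⟨ω, ?_, rfl⟩
  rcases Nat.eq_zero_or_pos (inv ω) with h0 | h0
  · exact absurd (eq_one_of_inv_eq_zero h0) hω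
  · omega

lemma Md_le_Mc (d : ℕ) (hd : 1 ≤ d) : Md K red d ≤ Mc K red := by
  apply Submodule.span_mono
  rintro w ⟨ω, hω, rfl⟩
  exact ⟨ω, ne_one_of_inv_pos (by omega), rfl⟩

lemma Md_bot : Md K red (n * n + 1) = ⊥ := by
  rw [Md, Submodule.span_eq_bot]
  rintro w ⟨ω, hω, rfl⟩
  exact absurd hω (by have := inv_le_sq ω; omega)

/-- The maximal submodule `M`. -/
def Msub (hred : ∀ ω, IsRedWord ω (red ω)) : Submodule (Rn K n) (Lbar K n) where
  carrier := Mc K red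
  add_mem' := fun ha hb => add_mem ha hb
  zero_mem' := zero_mem _
  smul_mem' := fun r y hy =>
    smul_stable K (Mc K red)
      (fun k y _ => by rw [X_smul_Lbar]; exact zero_mem _)
      (fun k y hy => T_smul_Mc K red hred k y hy) r y hy

lemma mk_one_eq (hred : ∀ ω, IsRedWord ω (red ω)) : (Submodule.Quotient.mk 1 : Lbar K n)
    = Submodule.Quotient.mk (tprod K (red 1)) := by
  rw [red_one red hred, tprod_nil]

/-- Every element decomposes as `c • 1̄ + m` with `m ∈ M`. -/
lemma exists_decomp (hred : ∀ ω, IsRedWord ω (red ω)) (z : Lbar K n) :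
    ∃ (c : K) (m : Lbar K n), m ∈ Mc K red ∧
      z = c • (Submodule.Quotient.mk 1 : Lbar K n) + m := by
  classical
  set mk1 : Lbar K n := Submodule.Quotient.mk 1 with hmk1
  have hfull : ∀ σ : Equiv.Perm (Fin n),
      (Submodule.Quotient.mk (tprod K (red σ)) : Lbar K n) ∈
        Submodule.span K (insert mk1 (Sset K red)) := by
    intro σ
    rcases eq_or_ne σ 1 with rfl | hσ
    · rw [← mk_one_eq K red hred]
      exact Submodule.subset_span (Set.mem_insert _ _)
    · exact Submodule.subset_span (Set.mem_insert_of_mem _ ⟨σ, hσ, rfl⟩)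
  have hstab : ∀ (r : Rn K n) (y : Lbar K n),
      y ∈ Submodule.span K (insert mk1 (Sset K red)) →
      r • y ∈ Submodule.span K (insert mk1 (Sset K red)) := by
    apply smul_stable
    · intro k y _; rw [X_smul_Lbar]; exact zero_mem _
    · intro k y hy
      induction hy using Submodule.span_induction with
      | mem w hw =>
        rcases Set.mem_insert_iff.1 hw with rfl | hw
        · rw [hmk1, mk_one_eq K red hred]
          rcases T_smul_mk_tprod K red hred k 1 with h | ⟨_, h⟩
          · rw [h]; exact zero_mem _
          · rw [h, mul_one]
            exact Submodule.subset_span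
              (Set.mem_insert_of_mem _ ⟨sPerm k, sPerm_ne_one k, rfl⟩)
        · obtain ⟨ω, hω, rfl⟩ := hw
          rcases T_smul_mk_tprod K red hred k ω with h | ⟨hi, h⟩
          · rw [h]; exact zero_mem _
          · rw [h]
            exact Submodule.subset_span
              (Set.mem_insert_of_mem _ ⟨sPerm k * ω, ne_one_of_inv_pos (by omega), rfl⟩)
      | zero => rw [smul_zero]; exact zero_mem _
      | add a b _ _ ha hb => rw [smul_add]; exact add_mem ha hb
      | smul c x _ hx => rw [rn_smul_ksmul]; exact Submodule.smul_mem _ c hx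
  have hz : z ∈ Submodule.span K (insert mk1 (Sset K red)) := by
    obtain ⟨r, rfl⟩ := Submodule.Quotient.mk_surjective _ z
    have : (Submodule.Quotient.mk r : Lbar K n) = r • mk1 := by
      rw [hmk1, ← Submodule.Quotient.mk_smul, smul_eq_mul, mul_one]
    rw [this]
    exact hstab r mk1 (Submodule.subset_span (Set.mem_insert _ _))
  obtain ⟨c, m, hm, hzc⟩ := Submodule.mem_span_insert.1 hz
  exact ⟨c, m, hm, hzc⟩

lemma mk_one_not_mem_Mc (hred : ∀ ω, IsRedWord ω (red ω)) : (Submodule.Quotient.mk 1 : Lbar K n) ∉ Mc K red := by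
  intro hmem
  set q : Lbar K n →ₗ[Rn K n] (Rn K n ⧸ Neps K n) :=
    Submodule.mapQ (XIdeal K n) (Neps K n) LinearMap.id (XIdeal_le_Neps K) with hq
  have hq_apply : ∀ x : Rn K n,
      q (Submodule.Quotient.mk x) = Submodule.Quotient.mk x := fun x => rfl
  have hker : Mc K red ≤ Submodule.restrictScalars K (LinearMap.ker q) := by
    rw [Mc, Submodule.span_le]
    rintro w ⟨ω, hω, rfl⟩
    have hne : red ω ≠ [] := by
      intro hc
      have := (RW_of_isRedWord (hred ω)).1
      rw [hc] at this
      exact hω (by simpa using this.symm)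
    simp only [SetLike.mem_coe, Submodule.restrictScalars_mem, LinearMap.mem_ker]
    rw [hq_apply]
    exact (Submodule.Quotient.mk_eq_zero _).2 (epsA_tprod_ne K hne)
  have h1 : q (Submodule.Quotient.mk 1) = 0 := hker hmem
  rw [hq_apply] at h1
  have : (1 : Rn K n) ∈ Neps K n := (Submodule.Quotient.mk_eq_zero _).1 h1
  have : epsA K n 1 = 0 := this
  rw [map_one] at this
  exact one_ne_zero this

/-- Any submodule not contained in `M` is everything. -/
lemma W_eq_top (hred : ∀ ω, IsRedWord ω (red ω)) (W : Submodule (Rn K n) (Lbar K n)) (w : Lbar K n)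
    (hwW : w ∈ W) (hwM : w ∉ Mc K red) : W = ⊤ := by
  classical
  have hRW : ∀ σ, RW (red σ) σ := fun σ => RW_of_isRedWord (hred σ)
  obtain ⟨c, m, hm, hwc⟩ := exists_decomp K red hred w
  have hc : c ≠ 0 := by
    rintro rfl
    refine hwM ?_
    have : w = m := by rw [hwc]; module
    exact this ▸ hm
  set W' : Submodule K (Lbar K n) := W.restrictScalars K with hW'
  have hmk1 : (Submodule.Quotient.mk 1 : Lbar K n) ∈ W' ⊔ Md K red 1 := by
    have h1 : (Submodule.Quotient.mk 1 : Lbar K n) = c⁻¹ • w - c⁻¹ • m := by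
      rw [hwc]
      match_scalars <;> field_simp <;> ring
    rw [h1]
    refine sub_mem ?_ ?_
    · exact Submodule.mem_sup_left (Submodule.smul_mem _ _ hwW)
    · exact Submodule.mem_sup_right (Submodule.smul_mem _ _ (Mc_le_Md1 K red hm))
  have base : (⊤ : Submodule K (Lbar K n)) ≤ W' ⊔ Md K red 1 := by
    intro z _
    obtain ⟨c', m', hm', hz⟩ := exists_decomp K red hred z
    rw [hz]
    exact add_mem (Submodule.smul_mem _ _ hmk1)
      (Submodule.mem_sup_right (Mc_le_Md1 K red hm'))
  have step : ∀ d : ℕ, 1 ≤ d → (⊤ : Submodule K (Lbar K n)) ≤ W' ⊔ Md K red d →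
      (⊤ : Submodule K (Lbar K n)) ≤ W' ⊔ Md K red (d + 1) := by
    intro d hd h
    have hMd : Md K red d ≤ W' ⊔ Md K red (d + 1) := by
      rw [Md, Submodule.span_le]
      rintro _ ⟨ω, hdω, rfl⟩
      have hω1 : ω ≠ 1 := ne_one_of_inv_pos (by omega)
      cases hrw : red ω with
      | nil =>
        exfalso
        have := (hRW ω).2
        rw [hrw] at this
        simp only [List.length_nil] at this
        omega
      | cons k rest =>
        have hcons : RW (k :: rest) ω := hrw ▸ hRW ω
        obtain ⟨hdes, hrest⟩ := RW_cons hcons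
        have hmk : (Submodule.Quotient.mk (tprod K (k :: rest)) : Lbar K n)
            = T K k • Submodule.Quotient.mk (tprod K (red (sPerm k * ω))) := by
          rw [← Submodule.Quotient.mk_smul, smul_eq_mul, tprod_cons]
          congr 2
          exact tprod_eq K hrest (hRW (sPerm k * ω))
        have hmem : (Submodule.Quotient.mk (tprod K (red (sPerm k * ω))) : Lbar K n)
            ∈ W' ⊔ Md K red d := h Submodule.mem_top
        obtain ⟨u, hu, y, hy, huy⟩ := Submodule.mem_sup.1 hmem
        rw [SetLike.mem_coe, hmk, ← huy, smul_add]
        refine add_mem ?_ ?_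
        · exact Submodule.mem_sup_left (W.smul_mem (T K k) hu)
        · exact Submodule.mem_sup_right (T_smul_Md K red hred k d y hy)
    calc (⊤ : Submodule K (Lbar K n)) ≤ W' ⊔ Md K red d := h
      _ ≤ W' ⊔ (W' ⊔ Md K red (d + 1)) := sup_le_sup_left hMd _
      _ = W' ⊔ Md K red (d + 1) := by rw [← sup_assoc, sup_idem]
  have chain : ∀ j : ℕ, (⊤ : Submodule K (Lbar K n)) ≤ W' ⊔ Md K red (1 + j) := by
    intro j
    induction j with
    | zero => exact base
    | succ e ih =>
      have := step (1 + e) (by omega) ih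
      rwa [show 1 + (e + 1) = 1 + e + 1 by omega]
  have hfin := chain (n * n)
  rw [show 1 + n * n = n * n + 1 by omega, Md_bot, sup_bot_eq] at hfin
  rw [eq_top_iff]
  intro z _
  exact hfin (Submodule.mem_top : z ∈ (⊤ : Submodule K (Lbar K n)))

end Red

end QH1

open QH1 in
/-- `M = span_K{τ_ω ⊗ v : ω ≠ 1}` is an `Rₙ`-submodule of `L̄`, every
proper `Rₙ`-submodule of `L̄` is contained in `M`, so `M` is the unique maximal
submodule, and `L̄/M` is the one-dimensional trivial module `V`. -/
theorem statement5 (K : Type) [Field K] [IsAlgClosed K] (n : ℕ) (hn : 1 ≤ n)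
    (r : ℕ) (hr : 0 < r) (a : ℤ) (ha : a ≤ 0) (ha2 : Even a)
    (red : Equiv.Perm (Fin n) → List (Fin (n - 1)))
    (hred : ∀ ω, IsRedWord ω (red ω)) :
    ∃ M : Submodule (Rn K n) (Lbar K n),
      -- `M` is the `K`-span of the `τ_ω ⊗ v` for `ω ≠ 1`
      (M : Set (Lbar K n)) =
        (Submodule.span K
          {w : Lbar K n | ∃ ω : Equiv.Perm (Fin n), ω ≠ 1 ∧
            w = Submodule.Quotient.mk (tprod K (red ω))} : Set (Lbar K n)) ∧
      M ≠ ⊤ ∧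
      -- every proper submodule is contained in `M`
      (∀ W : Submodule (Rn K n) (Lbar K n), W ≠ ⊤ → W ≤ M) ∧
      -- the quotient `L̄/M` is one-dimensional with trivial action of all generators
      (∀ z : Lbar K n ⧸ M, (∀ k : Fin n, X K k • z = 0) ∧ (∀ k : Fin (n - 1), T K k • z = 0)) ∧
      (∀ z : Lbar K n ⧸ M, ∃ c : K,
        z = c • (Submodule.mkQ M (Submodule.Quotient.mk (tprod K (red 1))))) := by
  
  classical
  refine ⟨Msub K red hred, ?_, ?_, ?_, ?_, ?_⟩
  · rfl
  · intro hM
    apply mk_one_not_mem_Mc K red hred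
    have hmem : (Submodule.Quotient.mk 1 : Lbar K n) ∈ Msub K red hred := by
      rw [hM]; trivial
    exact hmem
  · intro W hW z hz
    by_contra hzM
    exact hW (W_eq_top K red hred W z hz hzM)
  · intro z
    constructor
    · intro k
      obtain ⟨y, rfl⟩ := Submodule.Quotient.mk_surjective _ z
      rw [← Submodule.Quotient.mk_smul, X_smul_Lbar]
      exact (Submodule.Quotient.mk_eq_zero _).2 (zero_mem _)
    · intro k
      obtain ⟨y, rfl⟩ := Submodule.Quotient.mk_surjective _ z
      rw [← Submodule.Quotient.mk_smul]
      apply (Submodule.Quotient.mk_eq_zero _).2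
      obtain ⟨c, m, hm, rfl⟩ := exists_decomp K red hred y
      show T K k • _ ∈ Mc K red
      rw [smul_add, rn_smul_ksmul]
      refine add_mem (Submodule.smul_mem _ c ?_) (T_smul_Mc K red hred k m hm)
      rw [mk_one_eq K red hred]
      rcases T_smul_mk_tprod K red hred k 1 with h | ⟨_, h⟩
      · rw [h]; exact zero_mem _
      · rw [h, mul_one]
        exact Submodule.subset_span ⟨sPerm k, sPerm_ne_one k, rfl⟩
  · intro z
    obtain ⟨y, rfl⟩ := Submodule.Quotient.mk_surjective _ z
    obtain ⟨c, m, hm, rfl⟩ := exists_decomp K red hred y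
    refine ⟨c, ?_⟩
    have hm' : m ∈ Msub K red hred := hm
    rw [← mk_one_eq K red hred, Submodule.mkQ_apply, Submodule.Quotient.mk_add,
      Submodule.Quotient.mk_smul, (Submodule.Quotient.mk_eq_zero _).2 hm', add_zero]
end

section
/- Every gr-irreducible graded left R_n-module is isomorphic, as a graded module, to V{m} for some m ∈ ℤ, where V is the one-dimensional trivial R_n-module concentrated in degree 0 (every x_k and every τ_k acts by 0). In other words, V is the unique gr-irreducible R_n-module up to degree shift. -/
namespace QH1

variable (K : Type) [Field K]

/-- Degree of a generator: `deg x_k = 2r`, `deg τ_k = -r·a` (for the single imaginary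
index `i` with `r_i = r`, `a_{ii} = a`, so that `i·i = r·a`). -/
def gdeg (n : ℕ) (r : ℕ) (a : ℤ) : Gen n → ℤ
  | Gen.x _ => 2 * (r : ℤ)
  | Gen.t _ => -((r : ℤ) * a)

/-- The degree-`d` homogeneous component of `Rₙ`: the span of products of generators of
total degree `d` (together with the scalars in degree `0`). -/
def Comp (n : ℕ) (r : ℕ) (a : ℤ) (d : ℤ) : Submodule K (Rn K n) :=
  Submodule.span K
    {z : Rn K n | ∃ l : List (Gen n), (l.map (gdeg n r a)).sum = d ∧
      z = (l.map fun g => RingQuot.mkAlgHom K (Rel K n) (FreeAlgebra.ι K g)).prod}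

end QH1

namespace QH1Aux

variable {A : Type} [Ring A]

/-- descending list [m, m-1, ..., j] -/
def cL (m j : ℕ) : List ℕ := (List.range' j (m + 1 - j)).reverse

lemma cL_len (m j : ℕ) : (cL m j).length = m + 1 - j := by
  simp [cL]

lemma mem_cL {m j t : ℕ} (h : t ∈ cL m j) : j ≤ t ∧ t ≤ m := by
  simp only [cL, List.mem_reverse, List.mem_range'_1] at h
  omega

lemma cL_snoc {m j : ℕ} (h : j ≤ m) : cL m j = cL m (j+1) ++ [j] := by
  have h1 : m + 1 - j = (m - j) + 1 := by omega
  have h2 : m + 1 - (j + 1) = m - j := by omega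
  rw [cL, cL, h1, h2, List.range'_succ, List.reverse_cons]

lemma cL_split {m j k : ℕ} (hj : j ≤ k) (hk : k ≤ m + 1) :
    cL m j = cL m k ++ (List.range' j (k - j)).reverse := by
  rw [cL, cL, ← List.reverse_append]
  congr 1
  have h1 := List.range'_append_1 (s := j) (m := k - j) (n := m + 1 - k)
  rw [show j + (k - j) = k by omega] at h1
  rw [h1]
  congr 1
  omega

variable (f : ℕ → A)

def lp (l : List ℕ) : A := (l.map f).prod

lemma lp_append (l l' : List ℕ) : lp f (l ++ l') = lp f l * lp f l' := by
  simp [lp]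

lemma lp_comm {x : A} {L : List ℕ} (h : ∀ t ∈ L, Commute x (f t)) :
    x * lp f L = lp f L * x := by
  have : Commute x (lp f L) := by
    apply Commute.list_prod_right
    intro y hy
    rcases List.mem_map.mp hy with ⟨t, ht, rfl⟩
    exact h t ht
  exact this.eq

section trans
variable {m : ℕ}
variable (hsq : ∀ k, k < m + 1 → f k * f k = 0)
variable (hbr : ∀ k, k + 1 < m + 1 → f k * f (k+1) * f k = f (k+1) * f k * f (k+1))
variable (hfar : ∀ j k, k < m + 1 → j + 2 ≤ k → f j * f k = f k * f j)

lemma key_comm (x y P R : A) (hbr' : x*y*x = y*x*y) (hPy : y*P = P*y) (hRx : R*x = x*R) :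
    P * (x * (y * R)) * x = y * (P * (x * (y * R))) := by
  have h3 : x*(y*(x*R)) = y*(x*(y*R)) := by
    rw [← mul_assoc, ← mul_assoc, hbr', mul_assoc, mul_assoc]
  calc P * (x * (y * R)) * x = P * (x * (y * (R * x))) := by
        simp only [mul_assoc]
    _ = P * (x * (y * (x * R))) := by rw [hRx]
    _ = P * (y * (x * (y * R))) := by rw [h3]
    _ = y * (P * (x * (y * R))) := by rw [← mul_assoc, ← hPy, mul_assoc]

include hsq hbr hfar in
/-- transition: multiply a `(b, c)` state by one more generator. -/
lemma transition (b : List ℕ) (hb : ∀ t ∈ b, t < m) (c : Option ℕ)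
    (hc : ∀ j ∈ c, j ≤ m) (k : ℕ) (hk : k < m + 1) :
    lp f b * lp f (c.elim [] (cL m)) * f k = 0 ∨
    ∃ (b' : List ℕ) (c' : Option ℕ), (∀ t ∈ b', t < m) ∧ (∀ j ∈ c', j ≤ m) ∧
      b.length + (c.elim [] (cL m)).length + 1 ≤ b'.length + (c'.elim [] (cL m)).length ∧
      lp f b * lp f (c.elim [] (cL m)) * f k = lp f b' * lp f (c'.elim [] (cL m)) := by
  cases c with
  | none =>
    by_cases hkm : k = m
    · subst hkm
      right
      refine ⟨b, some k, hb, by simp, ?_, ?_⟩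
      · simp [cL_len]
      · have hck : cL k k = [k] := by
          simp [cL, show k + 1 - k = 1 by omega]
        simp [hck, lp, mul_assoc]
    · right
      refine ⟨b ++ [k], none, ?_, by simp, by simp, ?_⟩
      · intro t ht
        rcases List.mem_append.mp ht with h | h
        · exact hb t h
        · simp at h; omega
      · simp [lp_append, lp, mul_assoc]
  | some j =>
    have hj : j ≤ m := hc j rfl
    simp only [Option.elim_some]
    rcases lt_trichotomy k j with hkj | rfl | hjk
    · by_cases hk1 : k + 1 = j
      · right
        refine ⟨b, some k, hb, by simp; omega, ?_, ?_⟩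
        · simp only [Option.elim_some, cL_len]; omega
        · have hck : cL m k = cL m j ++ [k] := by
            rw [cL_snoc (by omega : k ≤ m), hk1]
          simp only [Option.elim_some, hck, lp_append]
          have h1 : lp f [k] = f k * 1 := by simp [lp]
          rw [h1]
          simp only [mul_one, mul_assoc]
      · have hcomm : f k * lp f (cL m j) = lp f (cL m j) * f k := by
          apply lp_comm
          intro t ht
          rcases mem_cL ht with ⟨h1, h2⟩
          exact hfar k t (by omega) (by omega)
        right
        refine ⟨b ++ [k], some j, ?_, by simpa using hj, ?_, ?_⟩
        · intro t ht
          rcases List.mem_append.mp ht with h | h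
          · exact hb t h
          · simp at h; omega
        · simp only [Option.elim_some, List.length_append, List.length_singleton]; omega
        · rw [mul_assoc, ← hcomm, lp_append]
          have h1 : lp f [k] = f k * 1 := by simp [lp]
          rw [h1]
          simp only [Option.elim_some, mul_one, mul_assoc]
    · left
      rw [cL_snoc hj, lp_append]
      have h1 : lp f [k] = f k * 1 := by simp [lp]
      rw [h1]
      calc lp f b * (lp f (cL m (k+1)) * (f k * 1)) * f k
          = lp f b * (lp f (cL m (k+1)) * (f k * f k)) := by
            simp only [mul_one, mul_assoc]
        _ = 0 := by rw [hsq k (by omega)]; simp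
    · right
      have hkm : k ≤ m := by omega
      have hsplit : cL m j = cL m (k+1) ++ ([k, k-1] ++ (List.range' j (k-1-j)).reverse) := by
        rw [cL_split (by omega : j ≤ k + 1) (by omega : k + 1 ≤ m + 1)]
        congr 1
        have h1 := List.range'_append_1 (s := j) (m := k-1-j) (n := 2)
        rw [show j + (k-1-j) = k - 1 by omega] at h1
        have h2 : List.range' (k-1) 2 = [k-1, k] := by
          simp [List.range'_succ, show k - 1 + 1 = k by omega]
        rw [show k + 1 - j = (k-1-j) + 2 by omega, ← h1, h2]
        simp
      set R := lp f ((List.range' j (k-1-j)).reverse) with hR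
      set P := lp f (cL m (k+1)) with hP
      have hCval : lp f (cL m j) = P * (f k * (f (k-1) * R)) := by
        rw [hsplit, lp_append, lp_append]
        have h1 : lp f [k, k-1] = f k * (f (k-1) * 1) := by simp [lp]
        rw [h1]
        simp only [mul_one, mul_assoc]
        rfl
      have hRx : R * f k = f k * R := by
        refine (lp_comm f ?_).symm
        intro t ht
        rw [List.mem_reverse, List.mem_range'_1] at ht
        exact (hfar t k (by omega) (by omega)).symm
      have hPy : f (k-1) * P = P * f (k-1) := by
        apply lp_comm
        intro t ht
        rcases mem_cL ht with ⟨h1, h2⟩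
        exact hfar (k-1) t (by omega) (by omega)
      have hbr' : f k * f (k-1) * f k = f (k-1) * f k * f (k-1) := by
        have h := hbr (k-1) (by omega)
        rw [show k-1+1 = k by omega] at h
        exact h.symm
      have hkey : lp f (cL m j) * f k = f (k-1) * lp f (cL m j) := by
        rw [hCval]
        exact key_comm (f k) (f (k-1)) P R hbr' hPy hRx
      refine ⟨b ++ [k-1], some j, ?_, by simpa using hj, ?_, ?_⟩
      · intro t ht
        rcases List.mem_append.mp ht with h | h
        · exact hb t h
        · simp at h; omega
      · simp only [Option.elim_some, List.length_append, List.length_singleton]; omega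
      · rw [mul_assoc, hkey, lp_append]
        have h1 : lp f [k-1] = f (k-1) * 1 := by simp [lp]
        rw [h1]
        simp only [Option.elim_some, mul_one, mul_assoc]
include hsq hbr hfar in
lemma process (l : List ℕ) (hl : ∀ t ∈ l, t < m + 1) :
    lp f l = 0 ∨ ∃ (b : List ℕ) (c : Option ℕ), (∀ t ∈ b, t < m) ∧ (∀ j ∈ c, j ≤ m) ∧
      l.length ≤ b.length + (c.elim [] (cL m)).length ∧
      lp f l = lp f b * lp f (c.elim [] (cL m)) := by
  induction l using List.reverseRecOn with
  | nil =>
    right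
    exact ⟨[], none, by simp, by simp, by simp, by simp [lp]⟩
  | append_singleton l k ih =>
    have hk : k < m + 1 := hl k (by simp)
    have hl' : ∀ t ∈ l, t < m + 1 := fun t ht => hl t (by simp [ht])
    have hlk : lp f (l ++ [k]) = lp f l * (f k * 1) := by
      rw [lp_append]; simp [lp]
    rcases ih hl' with h0 | ⟨b, c, hb, hc, hlen, heq⟩
    · left; rw [hlk, h0, zero_mul]
    · rcases transition f hsq hbr hfar b hb c hc k hk with h0 | ⟨b', c', hb', hc', hlen', heq'⟩
      · left
        rw [hlk, heq, mul_one, h0]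
      · right
        refine ⟨b', c', hb', hc', ?_, ?_⟩
        · simp only [List.length_append, List.length_singleton]; omega
        · rw [hlk, heq, mul_one, heq']

end trans

/-- bound for vanishing products: `bnd m = m(m+1)/2`-ish. -/
def bnd : ℕ → ℕ
  | 0 => 0
  | (m+1) => bnd m + (m + 1)

lemma nilcox (m : ℕ) (f : ℕ → A)
    (hsq : ∀ k, k < m → f k * f k = 0)
    (hbr : ∀ k, k + 1 < m → f k * f (k+1) * f k = f (k+1) * f k * f (k+1))
    (hfar : ∀ j k, k < m → j + 2 ≤ k → f j * f k = f k * f j) :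
    ∀ l : List ℕ, (∀ t ∈ l, t < m) → bnd m < l.length → lp f l = 0 := by
  induction m with
  | zero =>
    intro l hl hlen
    rcases l with _ | ⟨a, l⟩
    · simp [bnd] at hlen
    · exact absurd (hl a (by simp)) (by omega)
  | succ m ih =>
    intro l hl hlen
    rcases process f hsq hbr hfar l hl with h0 | ⟨b, c, hb, hc, hlc, heq⟩
    · exact h0
    · have hclen : (c.elim [] (cL m)).length ≤ m + 1 := by
        cases c with
        | none => simp
        | some j => simp [cL_len]
      have hblen : bnd m < b.length := by
        simp only [bnd] at hlen; omega
      have hb0 : lp f b = 0 :=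
        ih (fun k hk => hsq k (by omega)) (fun k hk => hbr k (by omega))
          (fun j k hk h2 => hfar j k (by omega) h2) b hb hblen
      rw [heq, hb0, zero_mul]

end QH1Aux

namespace QH1Aux
open QH1

variable {K : Type} [Field K] {n : ℕ}

/-- image of a generator in `Rn`. -/
def mkg (gn : Gen n) : Rn K n := RingQuot.mkAlgHom K (Rel K n) (FreeAlgebra.ι K gn)

/-- product of generator images along a list. -/
def mprod (l : List (Gen n)) : Rn K n := (l.map (mkg (K := K))).prod

lemma mprod_nil : mprod (K := K) (n := n) [] = 1 := rfl

lemma mprod_cons (gn : Gen n) (l : List (Gen n)) :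
    mprod (K := K) (gn :: l) = mkg gn * mprod l := by simp [mprod]

lemma mprod_append (l1 l2 : List (Gen n)) :
    mprod (K := K) (n := n) (l1 ++ l2) = mprod l1 * mprod l2 := by simp [mprod]

lemma mkg_x (k : Fin n) : mkg (K := K) (Gen.x k) = X K k := rfl

lemma mkg_t (k : Fin (n-1)) : mkg (K := K) (Gen.t k) = T K k := rfl

lemma mprod_x (k : Fin n) : mprod (K := K) [Gen.x k] = X K k := by
  simp [mprod, mkg_x]

lemma mprod_t (k : Fin (n-1)) : mprod (K := K) [Gen.t k] = T K k := by
  simp [mprod, mkg_t]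

lemma X_mul_X (k t : Fin n) : X K k * X K t = X K t * X K k := by
  have h := RingQuot.mkAlgHom_rel K (Rel.xx (K := K) k t)
  simpa only [X, map_mul] using h

lemma T_sq (k : Fin (n-1)) : T K k * T K k = 0 := by
  have h := RingQuot.mkAlgHom_rel K (Rel.tsq (K := K) k)
  simpa only [T, map_mul, map_zero] using h

lemma T_braid (k k' : Fin (n-1)) (h : k'.1 = k.1 + 1) :
    T K k * T K k' * T K k = T K k' * T K k * T K k' := by
  have h2 := RingQuot.mkAlgHom_rel K (Rel.braid (K := K) k k' h)
  simpa only [T, map_mul] using h2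

lemma T_far (k t : Fin (n-1)) (h : k.1 + 1 < t.1 ∨ t.1 + 1 < k.1) :
    T K k * T K t = T K t * T K k := by
  have h2 := RingQuot.mkAlgHom_rel K (Rel.ttfar (K := K) k t h)
  simpa only [T, map_mul] using h2

lemma T_mul_X (j : Fin (n-1)) (k : Fin n) :
    T K j * X K k = X K (sPerm j k) * T K j := by
  by_cases h1 : k = pc j
  · subst h1
    rw [show sPerm j (pc j) = ps j from Equiv.swap_apply_left _ _]
    have h := RingQuot.mkAlgHom_rel K (Rel.tx (K := K) j)
    simpa only [T, X, map_mul] using h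
  · by_cases h2 : k = ps j
    · subst h2
      rw [show sPerm j (ps j) = pc j from Equiv.swap_apply_right _ _]
      have h := (RingQuot.mkAlgHom_rel K (Rel.xt (K := K) j)).symm
      simpa only [T, X, map_mul] using h
    · rw [show sPerm j k = k from Equiv.swap_apply_of_ne_of_ne h1 h2]
      have h := RingQuot.mkAlgHom_rel K (Rel.txfar (K := K) j k h1 h2)
      simpa only [T, X, map_mul] using h

lemma X_mul_T (k : Fin n) (j : Fin (n-1)) :
    X K k * T K j = T K j * X K (sPerm j k) := by
  have h := (T_mul_X (K := K) j (sPerm j k)).symm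
  rwa [show sPerm j (sPerm j k) = k by simp [sPerm]] at h

lemma span_mprod :
    Submodule.span K {z : Rn K n | ∃ l : List (Gen n), z = mprod l} = ⊤ := by
  have h0 : Algebra.adjoin K (Set.range (mkg (K := K) (n := n))) = ⊤ := by
    have h1 : Set.range (mkg (K := K) (n := n)) =
        (RingQuot.mkAlgHom K (Rel K n)) '' (Set.range (FreeAlgebra.ι K)) := by
      rw [← Set.range_comp]; rfl
    rw [h1, ← AlgHom.map_adjoin, FreeAlgebra.adjoin_range_ι, Algebra.map_top]
    exact (AlgHom.range_eq_top _).mpr (RingQuot.mkAlgHom_surjective K _)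
  have h2 := Algebra.adjoin_eq_span (R := K) (s := Set.range (mkg (K := K) (n := n)))
  rw [h0] at h2
  have h3 : Submodule.span K
      ((Submonoid.closure (Set.range (mkg (K := K) (n := n)))) : Set (Rn K n)) = ⊤ := by
    rw [← h2]; rfl
  refine top_unique ?_
  rw [← h3]
  apply Submodule.span_mono
  intro z hz
  induction hz using Submonoid.closure_induction with
  | mem x h =>
    obtain ⟨gn, rfl⟩ := h
    exact ⟨[gn], by simp [mprod]⟩
  | one => exact ⟨[], rfl⟩
  | mul x y hx hy ihx ihy =>
    obtain ⟨l1, rfl⟩ := ihx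
    obtain ⟨l2, rfl⟩ := ihy
    exact ⟨l1 ++ l2, (mprod_append l1 l2).symm⟩

lemma mprod_mem_comp (r : ℕ) (a : ℤ) (l : List (Gen n)) :
    mprod (K := K) l ∈ Comp K n r a ((l.map (gdeg n r a)).sum) :=
  Submodule.subset_span ⟨l, rfl, rfl⟩

lemma gdeg_nonneg {r : ℕ} {a : ℤ} (ha : a ≤ 0) (gn : Gen n) : 0 ≤ gdeg n r a gn := by
  cases gn with
  | x k => simp [gdeg]
  | t k =>
    have h : 0 ≤ (r : ℤ) * (-a) := mul_nonneg (by positivity) (by omega)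
    simp only [gdeg]
    linarith

lemma degsum_nonneg {r : ℕ} {a : ℤ} (ha : a ≤ 0) (l : List (Gen n)) :
    0 ≤ (l.map (gdeg n r a)).sum := by
  induction l with
  | nil => simp
  | cons gn l ih =>
    simp only [List.map_cons, List.sum_cons]
    have := gdeg_nonneg (n := n) (r := r) ha gn
    omega

section mod

variable {M : Type} [AddCommGroup M] [Module K M] [Module (Rn K n) M]
  [IsScalarTower K (Rn K n) M]

lemma gen_closure {S : Set M}
    (hS : ∀ (gn : Gen n) (w : M), w ∈ S → mkg (K := K) gn • w ∈ Submodule.span K S) :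
    ∀ (z : Rn K n) (v : M), v ∈ Submodule.span K S → z • v ∈ Submodule.span K S := by
  haveI : SMulCommClass K (Rn K n) M := IsScalarTower.to_smulCommClass
  have h1 : ∀ (gn : Gen n) (v : M), v ∈ Submodule.span K S →
      mkg (K := K) gn • v ∈ Submodule.span K S := by
    intro gn v hv
    induction hv using Submodule.span_induction with
    | mem x h => exact hS gn x h
    | zero => rw [smul_zero]; exact Submodule.zero_mem _
    | add x y hx hy ihx ihy => rw [smul_add]; exact Submodule.add_mem _ ihx ihy
    | smul c x hx ih => rw [smul_comm]; exact Submodule.smul_mem _ c ih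
  have h2 : ∀ (l : List (Gen n)) (v : M), v ∈ Submodule.span K S →
      mprod (K := K) l • v ∈ Submodule.span K S := by
    intro l
    induction l with
    | nil => intro v hv; rw [mprod_nil, one_smul]; exact hv
    | cons gn l ih => intro v hv; rw [mprod_cons, mul_smul]; exact h1 gn _ (ih v hv)
  intro z v hv
  have hz : z ∈ Submodule.span K {z : Rn K n | ∃ l : List (Gen n), z = mprod l} := by
    rw [span_mprod]; trivial
  induction hz using Submodule.span_induction with
  | mem x h => obtain ⟨l, rfl⟩ := h; exact h2 l v hv
  | zero => rw [zero_smul]; exact Submodule.zero_mem _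
  | add x y hx hy ihx ihy => rw [add_smul]; exact Submodule.add_mem _ ihx ihy
  | smul c x hx ih => rw [smul_assoc]; exact Submodule.smul_mem _ c ih

/-- package a generator-stable `K`-span as an `Rn`-submodule. -/
def spanRn (S : Set M)
    (hS : ∀ (gn : Gen n) (w : M), w ∈ S → mkg (K := K) gn • w ∈ Submodule.span K S) :
    Submodule (Rn K n) M where
  carrier := Submodule.span K S
  add_mem' := fun h1 h2 => Submodule.add_mem _ h1 h2
  zero_mem' := Submodule.zero_mem _
  smul_mem' := fun z v hv => gen_closure hS z v hv

end mod

end QH1Aux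


open QH1 in
/-- every gr-irreducible graded left `Rₙ`-module is isomorphic, as a graded
module, to `V{m}` for some `m ∈ ℤ`, where `V` is the one-dimensional trivial module
concentrated in degree `0`:  i.e. any gr-irreducible graded module is one-dimensional,
concentrated in a single degree `m`, and all generators `x_k`, `τ_k` act by `0` on it. -/
theorem statement6 (K : Type) [Field K] [IsAlgClosed K] (n : ℕ) (hn : 1 ≤ n)
    (r : ℕ) (hr : 0 < r) (a : ℤ) (ha : a ≤ 0) (ha2 : Even a)
    -- a graded `Rₙ`-module `M`:
    (M : Type) [AddCommGroup M] [Module K M] [Module (Rn K n) M]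
    [IsScalarTower K (Rn K n) M]
    (g : ℤ → Submodule K M) [DirectSum.Decomposition g]
    (hcompat : ∀ (e d : ℤ) (z : Rn K n), z ∈ Comp K n r a e →
      ∀ m ∈ g d, z • m ∈ g (e + d))
    -- which is gr-irreducible:
    (hnontriv : Nontrivial M)
    (hirr : ∀ N : Submodule (Rn K n) M,
      (∀ m ∈ N, ∀ d : ℤ, (DirectSum.decompose g m d : M) ∈ N) → N = ⊥ ∨ N = ⊤) :
    -- then `M ≅ V{m}` as graded modules:
    ∃ m : ℤ,
      (∀ d : ℤ, d ≠ m → g d = ⊥) ∧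
      (∃ b : M, ∀ v : M, ∃ c : K, v = c • b) ∧
      (∀ (k : Fin n) (v : M), X K k • v = 0) ∧
      (∀ (k : Fin (n - 1)) (v : M), T K k • v = 0) := by
  classical
  haveI : SMulCommClass K (Rn K n) M := IsScalarTower.to_smulCommClass
  obtain ⟨v, hv⟩ := exists_ne (0 : M)
  have hexd : ∃ d : ℤ, (DirectSum.decompose g v d : M) ≠ 0 := by
    by_contra hcon
    push_neg at hcon
    apply hv
    have hs := DirectSum.sum_support_decompose g v
    rw [← hs]
    exact Finset.sum_eq_zero fun d _ => hcon d
  obtain ⟨d₀, hu0⟩ := hexd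
  set u : M := (DirectSum.decompose g v d₀ : M) with hudef
  have hu : u ∈ g d₀ := SetLike.coe_mem _
  have hrz : (0:ℤ) < (r:ℤ) := by exact_mod_cast hr
  -- decomposition of a monomial action
  have dec_mprod : ∀ (l : List (Gen n)) (d : ℤ) (w : M),
      (DirectSum.decompose g (QH1Aux.mprod (K := K) l • w) d : M)
        = QH1Aux.mprod (K := K) l •
            (DirectSum.decompose g w (d - (l.map (gdeg n r a)).sum) : M) := by
    intro l d w
    induction w using DirectSum.Decomposition.inductionOn g with
    | zero => simp
    | @homogeneous i w =>
      have hm : QH1Aux.mprod (K := K) l • (w : M) ∈ g ((l.map (gdeg n r a)).sum + i) :=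
        hcompat _ i _ (QH1Aux.mprod_mem_comp r a l) _ (SetLike.coe_mem w)
      by_cases hd : d = (l.map (gdeg n r a)).sum + i
      · rw [hd, DirectSum.decompose_of_mem_same g hm,
            show (l.map (gdeg n r a)).sum + i - (l.map (gdeg n r a)).sum = i by ring,
            DirectSum.decompose_of_mem_same g (SetLike.coe_mem w)]
      · rw [DirectSum.decompose_of_mem_ne g hm (Ne.symm hd),
            DirectSum.decompose_of_mem_ne g (SetLike.coe_mem w)
              (show i ≠ d - (l.map (gdeg n r a)).sum by omega), smul_zero]
    | add w w' ih ih' =>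
      rw [smul_add, DirectSum.decompose_add, DirectSum.add_apply, Submodule.coe_add, ih, ih',
          DirectSum.decompose_add, DirectSum.add_apply, Submodule.coe_add, smul_add]
  have dec_add : ∀ (d : ℤ) (w w' : M), (DirectSum.decompose g (w + w') d : M)
      = (DirectSum.decompose g w d : M) + (DirectSum.decompose g w' d : M) := by
    intro d w w'
    rw [DirectSum.decompose_add, DirectSum.add_apply, Submodule.coe_add]
  have dec_smul : ∀ (d : ℤ) (c : K) (w : M), (DirectSum.decompose g (c • w) d : M)
      = c • (DirectSum.decompose g w d : M) := by
    intro d c w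
    rw [DirectSum.decompose_smul, DirectSum.smul_apply, Submodule.coe_smul]
  have dec_zero : ∀ d : ℤ, (DirectSum.decompose g (0 : M) d : M) = 0 := by
    intro d
    rw [DirectSum.decompose_zero]
    rfl
  -- the cyclic graded submodule generated by u is everything
  set Su : Set M := {w : M | ∃ l : List (Gen n), w = QH1Aux.mprod (K := K) l • u}
    with hSudef
  have hSu_gen : ∀ (gn : Gen n) (w : M), w ∈ Su →
      QH1Aux.mkg (K := K) gn • w ∈ Submodule.span K Su := by
    rintro gn w ⟨l, rfl⟩
    refine Submodule.subset_span ⟨gn :: l, ?_⟩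
    rw [QH1Aux.mprod_cons, mul_smul]
  have hSu_graded : ∀ w ∈ Submodule.span K Su, ∀ d : ℤ,
      (DirectSum.decompose g w d : M) ∈ Submodule.span K Su := by
    intro w hw d
    induction hw using Submodule.span_induction with
    | mem x h =>
      obtain ⟨l, rfl⟩ := h
      rw [dec_mprod]
      by_cases hd : d - (l.map (gdeg n r a)).sum = d₀
      · rw [hd, DirectSum.decompose_of_mem_same g hu]
        exact Submodule.subset_span ⟨l, rfl⟩
      · rw [DirectSum.decompose_of_mem_ne g hu (Ne.symm hd), smul_zero]
        exact Submodule.zero_mem _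
    | zero => rw [dec_zero]; exact Submodule.zero_mem _
    | add x y hx hy ihx ihy => rw [dec_add]; exact Submodule.add_mem _ ihx ihy
    | smul c x hx ih => rw [dec_smul]; exact Submodule.smul_mem _ c ih
  have hu_mem : u ∈ Submodule.span K Su :=
    Submodule.subset_span ⟨[], by rw [QH1Aux.mprod_nil, one_smul]⟩
  have hNu_top : ∀ w : M, w ∈ Submodule.span K Su := by
    rcases hirr (QH1Aux.spanRn Su hSu_gen) (fun w hw d => hSu_graded w hw d) with hbot | htop
    · exfalso
      apply hu0
      have h2 : u ∈ (⊥ : Submodule (Rn K n) M) := by rw [← hbot]; exact hu_mem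
      simpa using h2
    · intro w
      have h2 : w ∈ (⊤ : Submodule (Rn K n) M) := trivial
      rw [← htop] at h2
      exact h2
  -- everything below degree d₀ vanishes
  have hlow : ∀ e : ℤ, e < d₀ → ∀ w : M, w ∈ g e → w = 0 := by
    intro e he w hw
    have h1 : (DirectSum.decompose g w e : M) = w := DirectSum.decompose_of_mem_same g hw
    rw [← h1]
    have h2 : ∀ w' ∈ Submodule.span K Su, (DirectSum.decompose g w' e : M) = 0 := by
      intro w' hw'
      induction hw' using Submodule.span_induction with
      | mem x h =>
        obtain ⟨l, rfl⟩ := h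
        rw [dec_mprod]
        have hds := QH1Aux.degsum_nonneg (n := n) (r := r) ha l
        rw [DirectSum.decompose_of_mem_ne g hu
          (show d₀ ≠ e - (l.map (gdeg n r a)).sum by omega), smul_zero]
      | zero => exact dec_zero e
      | add x y hx hy ihx ihy => rw [dec_add, ihx, ihy, add_zero]
      | smul c x hx ih => rw [dec_smul, ih, smul_zero]
    exact h2 w (hNu_top w)
  -- the dots act by zero
  set SX : Set M := {w : M | ∃ (k : Fin n) (w' : M), w = X K k • w'} with hSXdef
  have hSX_gen : ∀ (gn : Gen n) (w : M), w ∈ SX →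
      QH1Aux.mkg (K := K) gn • w ∈ Submodule.span K SX := by
    rintro gn w ⟨k, w', rfl⟩
    apply Submodule.subset_span
    cases gn with
    | x j =>
      refine ⟨k, X K j • w', ?_⟩
      rw [QH1Aux.mkg_x, ← mul_smul, QH1Aux.X_mul_X, mul_smul]
    | t j =>
      refine ⟨sPerm j k, T K j • w', ?_⟩
      rw [QH1Aux.mkg_t, ← mul_smul, QH1Aux.T_mul_X, mul_smul]
  have hdx : ∀ k : Fin n, ((([Gen.x k] : List (Gen n)).map (gdeg n r a)).sum) = 2 * (r:ℤ) := by
    intro k; simp [gdeg]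
  have hSX_graded : ∀ w ∈ Submodule.span K SX, ∀ d : ℤ,
      (DirectSum.decompose g w d : M) ∈ Submodule.span K SX := by
    intro w hw d
    induction hw using Submodule.span_induction with
    | mem x h =>
      obtain ⟨k, w', rfl⟩ := h
      rw [← QH1Aux.mprod_x (K := K) k, dec_mprod]
      exact Submodule.subset_span ⟨k, _, by rw [QH1Aux.mprod_x]⟩
    | zero => rw [dec_zero]; exact Submodule.zero_mem _
    | add x y hx hy ihx ihy => rw [dec_add]; exact Submodule.add_mem _ ihx ihy
    | smul c x hx ih => rw [dec_smul]; exact Submodule.smul_mem _ c ih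
  have hX : ∀ (k : Fin n) (w : M), X K k • w = 0 := by
    rcases hirr (QH1Aux.spanRn SX hSX_gen) (fun w hw d => hSX_graded w hw d) with hbot | htop
    · intro k w
      have h1 : X K k • w ∈ Submodule.span K SX := Submodule.subset_span ⟨k, w, rfl⟩
      have h2 : X K k • w ∈ (⊥ : Submodule (Rn K n) M) := by rw [← hbot]; exact h1
      simpa using h2
    · exfalso
      apply hu0
      have hu_in : u ∈ Submodule.span K SX := by
        have h2 : u ∈ (⊤ : Submodule (Rn K n) M) := trivial
        rw [← htop] at h2
        exact h2
      have h2 : ∀ w' ∈ Submodule.span K SX, (DirectSum.decompose g w' d₀ : M) = 0 := by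
        intro w' hw'
        induction hw' using Submodule.span_induction with
        | mem x h =>
          obtain ⟨k, w'', rfl⟩ := h
          rw [← QH1Aux.mprod_x (K := K) k, dec_mprod, hdx k,
            hlow (d₀ - 2 * (r:ℤ)) (by omega) _ (SetLike.coe_mem _), smul_zero]
        | zero => exact dec_zero d₀
        | add x y hx hy ihx ihy => rw [dec_add, ihx, ihy, add_zero]
        | smul c x hx ih => rw [dec_smul, ih, smul_zero]
      have h3 := h2 u hu_in
      rwa [DirectSum.decompose_of_mem_same g hu] at h3
  -- the crossings act by zero
  set ST : Set M := {w : M | ∃ (k : Fin (n-1)) (w' : M), w = T K k • w'} with hSTdef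
  have hST_gen : ∀ (gn : Gen n) (w : M), w ∈ ST →
      QH1Aux.mkg (K := K) gn • w ∈ Submodule.span K ST := by
    rintro gn w ⟨k, w', rfl⟩
    apply Submodule.subset_span
    cases gn with
    | x j =>
      refine ⟨k, X K (sPerm k j) • w', ?_⟩
      rw [QH1Aux.mkg_x, ← mul_smul, QH1Aux.X_mul_T, mul_smul]
    | t j =>
      exact ⟨j, T K k • w', by rw [QH1Aux.mkg_t]⟩
  have hST_graded : ∀ w ∈ Submodule.span K ST, ∀ d : ℤ,
      (DirectSum.decompose g w d : M) ∈ Submodule.span K ST := by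
    intro w hw d
    induction hw using Submodule.span_induction with
    | mem x h =>
      obtain ⟨k, w', rfl⟩ := h
      rw [← QH1Aux.mprod_t (K := K) k, dec_mprod]
      exact Submodule.subset_span ⟨k, _, by rw [QH1Aux.mprod_t]⟩
    | zero => rw [dec_zero]; exact Submodule.zero_mem _
    | add x y hx hy ihx ihy => rw [dec_add]; exact Submodule.add_mem _ ihx ihy
    | smul c x hx ih => rw [dec_smul]; exact Submodule.smul_mem _ c ih
  have hT : ∀ (k : Fin (n-1)) (w : M), T K k • w = 0 := by
    rcases hirr (QH1Aux.spanRn ST hST_gen) (fun w hw d => hST_graded w hw d) with hbot | htop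
    · intro k w
      have h1 : T K k • w ∈ Submodule.span K ST := Submodule.subset_span ⟨k, w, rfl⟩
      have h2 : T K k • w ∈ (⊥ : Submodule (Rn K n) M) := by rw [← hbot]; exact h1
      simpa using h2
    · exfalso
      -- nil-Coxeter nilpotency gives a contradiction
      set f : ℕ → Rn K n := fun i => if h : i < n - 1 then T K ⟨i, h⟩ else 0 with hf
      have hfT : ∀ (i : ℕ) (h : i < n - 1), f i = T K ⟨i, h⟩ := by
        intro i h
        simp only [hf]
        rw [dif_pos h]
      have hsq : ∀ k, k < n - 1 → f k * f k = 0 := by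
        intro k hk
        rw [hfT k hk]
        exact QH1Aux.T_sq _
      have hbr : ∀ k, k + 1 < n - 1 → f k * f (k+1) * f k = f (k+1) * f k * f (k+1) := by
        intro k hk
        have h1 : k < n - 1 := by omega
        rw [hfT k h1, hfT (k+1) hk]
        exact QH1Aux.T_braid ⟨k, h1⟩ ⟨k+1, hk⟩ rfl
      have hfar : ∀ j k, k < n - 1 → j + 2 ≤ k → f j * f k = f k * f j := by
        intro j k hk hj
        have h1 : j < n - 1 := by omega
        rw [hfT j h1, hfT k hk]
        exact QH1Aux.T_far ⟨j, h1⟩ ⟨k, hk⟩ (Or.inl (by simpa using by omega))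
      have hTtop : ∀ w : M, w ∈ Submodule.span K ST := by
        intro w
        have h2 : w ∈ (⊤ : Submodule (Rn K n) M) := trivial
        rw [← htop] at h2
        exact h2
      have key : ∀ L : ℕ, ∀ w : M, w ∈ Submodule.span K
          {z : M | ∃ l : List ℕ, (∀ t ∈ l, t < n - 1) ∧ l.length = L ∧
            ∃ w' : M, z = QH1Aux.lp f l • w'} := by
        intro L
        induction L with
        | zero =>
          intro w
          exact Submodule.subset_span ⟨[], by simp, rfl, w, by simp [QH1Aux.lp]⟩
        | succ L ih =>
          intro w
          refine Submodule.span_le.mpr ?_ (ih w)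
          rintro z ⟨l, hl, hlen, w', rfl⟩
          rw [SetLike.mem_coe]
          have hw' := hTtop w'
          induction hw' using Submodule.span_induction with
          | mem x h =>
            obtain ⟨k, w'', rfl⟩ := h
            apply Submodule.subset_span
            refine ⟨l ++ [k.1], ?_, by simp [hlen], w'', ?_⟩
            · intro t ht
              rcases List.mem_append.mp ht with h2 | h2
              · exact hl t h2
              · simp only [List.mem_singleton] at h2
                subst h2
                exact k.2
            · rw [QH1Aux.lp_append,
                show QH1Aux.lp f [k.1] = f k.1 * 1 by simp [QH1Aux.lp],
                hfT k.1 k.2, mul_one, mul_smul]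
          | zero => rw [smul_zero]; exact Submodule.zero_mem _
          | add x y hx hy ihx ihy => rw [smul_add]; exact Submodule.add_mem _ ihx ihy
          | smul c x hx ih2 => rw [smul_comm]; exact Submodule.smul_mem _ c ih2
      have hzero := key (QH1Aux.bnd (n-1) + 1) v
      apply hv
      have hsub : {z : M | ∃ l : List ℕ, (∀ t ∈ l, t < n - 1) ∧
          l.length = QH1Aux.bnd (n-1) + 1 ∧ ∃ w' : M, z = QH1Aux.lp f l • w'}
          ⊆ ↑(⊥ : Submodule K M) := by
        rintro z ⟨l, hl, hlen, w', rfl⟩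
        have h0 : QH1Aux.lp f l = 0 :=
          QH1Aux.nilcox (n-1) f hsq hbr hfar l hl (by omega)
        simp [h0]
      have h4 := Submodule.span_le.mpr hsub hzero
      simpa using h4
  -- assemble the conclusion
  have hmono_u : ∀ (l : List (Gen n)), QH1Aux.mprod (K := K) l • u ∈ Submodule.span K {u} := by
    intro l
    cases l with
    | nil =>
      rw [QH1Aux.mprod_nil, one_smul]
      exact Submodule.mem_span_singleton_self u
    | cons gn l =>
      rw [QH1Aux.mprod_cons, mul_smul]
      cases gn with
      | x k => rw [QH1Aux.mkg_x, hX]; exact Submodule.zero_mem _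
      | t k => rw [QH1Aux.mkg_t, hT]; exact Submodule.zero_mem _
  have hall : ∀ w : M, ∃ c : K, w = c • u := by
    intro w
    have h1 : w ∈ Submodule.span K Su := hNu_top w
    have h2 : Submodule.span K Su ≤ Submodule.span K {u} := by
      refine Submodule.span_le.mpr ?_
      rintro z ⟨l, rfl⟩
      exact hmono_u l
    obtain ⟨c, hc⟩ := Submodule.mem_span_singleton.mp (h2 h1)
    exact ⟨c, hc.symm⟩
  refine ⟨d₀, ?_, ⟨u, hall⟩, hX, hT⟩
  intro d hd
  rw [Submodule.eq_bot_iff]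
  intro w hw
  obtain ⟨c, rfl⟩ := hall w
  have h1 : (DirectSum.decompose g (c • u) d : M) = c • u :=
    DirectSum.decompose_of_mem_same g hw
  rw [← h1, dec_smul, DirectSum.decompose_of_mem_ne g hu (Ne.symm hd), smul_zero]
end
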